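/- arXiv:1607.07165 — 5 statements merged into one kernel-verified Lean document; each statement's English description precedes it below -/
import Mathlib

section
/- Let L be an N×N tridiagonal real matrix. Then L is totally nonnegative if and only if (i) every contiguous principal minor det L[{n,n+1,...,m},{n,n+1,...,m}] (for 1 ≤ n ≤ m ≤ N) is nonnegative, and (ii) every off-diagonal entry of L is nonnegative. -/
/-- A real matrix is totally nonnegative if all its minors are nonnegative. -/
def TNN {N : ℕ} (A : Matrix (Fin N) (Fin N) ℝ) : Prop :=
  ∀ (k : ℕ) (r c : Fin k → Fin N), StrictMono r → StrictMono c →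
    0 ≤ (A.submatrix r c).det

/-- A matrix is tridiagonal if entries vanish off the three central diagonals. -/
def Tridiagonal {N : ℕ} (A : Matrix (Fin N) (Fin N) ℝ) : Prop :=
  ∀ i j : Fin N, ((i : ℕ) + 1 < j ∨ (j : ℕ) + 1 < i) → A i j = 0

lemma det_block_zero₁₂ {m p : ℕ} (M : Matrix (Fin (m + p)) (Fin (m + p)) ℝ)
    (h : ∀ (i : Fin m) (j : Fin p), M (Fin.castAdd p i) (Fin.natAdd m j) = 0) :
    M.det = (M.submatrix (Fin.castAdd p) (Fin.castAdd p)).det *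
            (M.submatrix (Fin.natAdd m) (Fin.natAdd m)).det := by
  rw [← Matrix.det_submatrix_equiv_self finSumFinEquiv M]
  have hM : M.submatrix finSumFinEquiv finSumFinEquiv =
      Matrix.fromBlocks (M.submatrix (Fin.castAdd p) (Fin.castAdd p)) 0
        (M.submatrix (Fin.natAdd m) (Fin.castAdd p))
        (M.submatrix (Fin.natAdd m) (Fin.natAdd m)) := by
    ext i j
    cases i <;> cases j <;>
      simp [Matrix.fromBlocks, h]
  rw [hM, Matrix.det_fromBlocks_zero₁₂]

lemma det_block_zero₂₁ {m p : ℕ} (M : Matrix (Fin (m + p)) (Fin (m + p)) ℝ)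
    (h : ∀ (i : Fin p) (j : Fin m), M (Fin.natAdd m i) (Fin.castAdd p j) = 0) :
    M.det = (M.submatrix (Fin.castAdd p) (Fin.castAdd p)).det *
            (M.submatrix (Fin.natAdd m) (Fin.natAdd m)).det := by
  rw [← Matrix.det_submatrix_equiv_self finSumFinEquiv M]
  have hM : M.submatrix finSumFinEquiv finSumFinEquiv =
      Matrix.fromBlocks (M.submatrix (Fin.castAdd p) (Fin.castAdd p))
        (M.submatrix (Fin.castAdd p) (Fin.natAdd m)) 0
        (M.submatrix (Fin.natAdd m) (Fin.natAdd m)) := by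
    ext i j
    cases i <;> cases j <;>
      simp [Matrix.fromBlocks, h]
  rw [hM, Matrix.det_fromBlocks_zero₂₁]

lemma key {N : ℕ} (L : Matrix (Fin N) (Fin N) ℝ) (hTri : Tridiagonal L)
    (hP : ∀ (a k : ℕ) (hak : a + k ≤ N),
        0 ≤ (L.submatrix
              (fun i : Fin k => (⟨a + i, Nat.lt_of_lt_of_le (Nat.add_lt_add_left i.isLt a) hak⟩ : Fin N))
              (fun i : Fin k => (⟨a + i, Nat.lt_of_lt_of_le (Nat.add_lt_add_left i.isLt a) hak⟩ : Fin N))).det)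
    (hOff : ∀ i j : Fin N, i ≠ j → 0 ≤ L i j) :
    ∀ (k : ℕ) (r c : Fin k → Fin N), StrictMono r → StrictMono c →
      0 ≤ (L.submatrix r c).det := by
  intro k
  induction k using Nat.strong_induction_on with
  | _ k IH =>
  cases k with
  | zero =>
    intro r c _ _
    simp [Matrix.det_fin_zero]
  | succ k =>
  intro r c hr hc
  obtain ⟨A, hA⟩ : ∃ a, a = (r 0).val := ⟨_, rfl⟩
  obtain ⟨B, hB⟩ : ∃ b, b = (c 0).val := ⟨_, rfl⟩
  rcases lt_trichotomy (A + 1) B with hcase | hcase | hcase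
  · -- B > A + 1 : first row is zero
    have hz : ∀ j, (L.submatrix r c) 0 j = 0 := by
      intro j
      apply hTri
      left
      have : c 0 ≤ c j := hc.monotone (Fin.zero_le j)
      have := Fin.le_iff_val_le_val.mp this
      omega
    exact le_of_eq (Matrix.det_eq_zero_of_row_eq_zero 0 hz).symm
  · -- B = A + 1 : expand along first row
    rw [Matrix.det_succ_row_zero]
    rw [Finset.sum_eq_single_of_mem 0 (Finset.mem_univ 0) ?side]
    case side =>
      intro j _ hj
      have hz : (L.submatrix r c) 0 j = 0 := by
        apply hTri
        left
        have h0 : (0 : Fin (k+1)) < j := Fin.pos_of_ne_zero hj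
        have := Fin.lt_iff_val_lt_val.mp (hc h0)
        omega
      rw [hz]; ring
    · simp only [Fin.val_zero, pow_zero, one_mul, Fin.succAbove_zero,
        Matrix.submatrix_submatrix]
      have hne : r 0 ≠ c 0 := by
        intro h; rw [h] at hA; omega
      have h1 : (0:ℝ) ≤ L (r 0) (c 0) := hOff _ _ hne
      have h2 : 0 ≤ (L.submatrix (r ∘ Fin.succ) (c ∘ Fin.succ)).det :=
        IH k (Nat.lt_succ_self k) _ _ (hr.comp Fin.strictMono_succ)
          (hc.comp Fin.strictMono_succ)
      exact mul_nonneg h1 h2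
  · rcases lt_trichotomy (B + 1) A with hcase2 | hcase2 | hcase2
    · -- A > B + 1 : first column is zero
      have hz : ∀ i, (L.submatrix r c) i 0 = 0 := by
        intro i
        apply hTri
        right
        have : r 0 ≤ r i := hr.monotone (Fin.zero_le i)
        have := Fin.le_iff_val_le_val.mp this
        omega
      exact le_of_eq (Matrix.det_eq_zero_of_column_eq_zero 0 hz).symm
    · -- A = B + 1 : expand along first column
      rw [Matrix.det_succ_column_zero]
      rw [Finset.sum_eq_single_of_mem 0 (Finset.mem_univ 0) ?side]
      case side =>
        intro i _ hi
        have hz : (L.submatrix r c) i 0 = 0 := by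
          apply hTri
          right
          have h0 : (0 : Fin (k+1)) < i := Fin.pos_of_ne_zero hi
          have := Fin.lt_iff_val_lt_val.mp (hr h0)
          omega
        rw [hz]; ring
      · simp only [Fin.val_zero, pow_zero, one_mul, Fin.succAbove_zero,
          Matrix.submatrix_submatrix]
        have hne : r 0 ≠ c 0 := by
          intro h; rw [h] at hA; omega
        have h1 : (0:ℝ) ≤ L (r 0) (c 0) := hOff _ _ hne
        have h2 : 0 ≤ (L.submatrix (r ∘ Fin.succ) (c ∘ Fin.succ)).det :=
          IH k (Nat.lt_succ_self k) _ _ (hr.comp Fin.strictMono_succ)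
            (hc.comp Fin.strictMono_succ)
        exact mul_nonneg h1 h2
    · -- A = B : contiguous-block splitting
      have hAB : A = B := by omega
      classical
      have hex : ∃ i : ℕ, k + 1 ≤ i ∨ ∃ h : i < k + 1,
          (r ⟨i, h⟩).val ≠ A + i ∨ (c ⟨i, h⟩).val ≠ A + i :=
        ⟨k + 1, Or.inl le_rfl⟩
      obtain ⟨m, hmspec, hmin0⟩ :
          ∃ m : ℕ, (k + 1 ≤ m ∨ ∃ h : m < k + 1,
              (r ⟨m, h⟩).val ≠ A + m ∨ (c ⟨m, h⟩).val ≠ A + m) ∧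
            ∀ i, i < m → ¬(k + 1 ≤ i ∨ ∃ h : i < k + 1,
              (r ⟨i, h⟩).val ≠ A + i ∨ (c ⟨i, h⟩).val ≠ A + i) :=
        ⟨Nat.find hex, Nat.find_spec hex, fun i hi => Nat.find_min hex hi⟩
      have hmin : ∀ i < m, ∀ h : i < k + 1,
          (r ⟨i, h⟩).val = A + i ∧ (c ⟨i, h⟩).val = A + i := by
        intro i hi h
        have := hmin0 i hi
        push_neg at this
        obtain ⟨h1, h2⟩ := this
        exact ⟨(h2 h).1, (h2 h).2⟩
      have hm1 : 1 ≤ m := by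
        rcases Nat.eq_zero_or_pos m with h0 | h0
        · exfalso
          subst h0
          rcases hmspec with h | ⟨h, hor⟩
          · omega
          · have e0 : (⟨0, h⟩ : Fin (k+1)) = 0 := rfl
            rcases hor with h' | h' <;> rw [e0] at h' <;> omega
        · exact h0
      have hmk : m ≤ k + 1 := by
        by_contra hgt
        exact hmin0 (k+1) (by omega) (Or.inl le_rfl)
      rcases eq_or_lt_of_le hmk with hmeq | hmlt
      · -- fully contiguous: use hP directly
        have hak : A + (k + 1) ≤ N := by
          have hlast : (r ⟨k, Nat.lt_succ_self k⟩).val = A + k :=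
            (hmin k (by omega) _).1
          have := (r ⟨k, Nat.lt_succ_self k⟩).isLt
          omega
        have hr' : r = fun i : Fin (k+1) =>
            (⟨A + i, Nat.lt_of_lt_of_le (Nat.add_lt_add_left i.isLt A) hak⟩ : Fin N) := by
          funext i
          exact Fin.ext ((hmin i (by omega) i.isLt).1)
        have hc' : c = fun i : Fin (k+1) =>
            (⟨A + i, Nat.lt_of_lt_of_le (Nat.add_lt_add_left i.isLt A) hak⟩ : Fin N) := by
          funext i
          exact Fin.ext ((hmin i (by omega) i.isLt).2)
        subst hr'
        subst hc'
        exact hP A (k+1) hak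
      · -- split at m
        have hmk' : m < k + 1 := hmlt
        set p := k + 1 - m with hp
        have hmp : m + p = k + 1 := by omega
        have hp1 : 1 ≤ p := by omega
        -- facts about r m, c m
        have hrm : A + m ≤ (r ⟨m, hmk'⟩).val := by
          have h1 : (r ⟨m - 1, by omega⟩).val = A + (m - 1) :=
            (hmin (m-1) (by omega) _).1
          have h2 : r ⟨m - 1, by omega⟩ < r ⟨m, hmk'⟩ := hr (Fin.mk_lt_mk.mpr (by omega))
          have := Fin.lt_iff_val_lt_val.mp h2
          omega
        have hcm : A + m ≤ (c ⟨m, hmk'⟩).val := by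
          have h1 : (c ⟨m - 1, by omega⟩).val = A + (m - 1) :=
            (hmin (m-1) (by omega) _).2
          have h2 : c ⟨m - 1, by omega⟩ < c ⟨m, hmk'⟩ := hc (Fin.mk_lt_mk.mpr (by omega))
          have := Fin.lt_iff_val_lt_val.mp h2
          omega
        have hor : (r ⟨m, hmk'⟩).val ≠ A + m ∨ (c ⟨m, hmk'⟩).val ≠ A + m := by
          rcases hmspec with h | ⟨h, hh⟩
          · omega
          · exact hh
        have hAmN : A + m ≤ N := by
          have := (r ⟨m, hmk'⟩).isLt; omega
        -- the reindexed matrix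
        have hdet : (L.submatrix r c).det =
            ((L.submatrix r c).submatrix (finCongr hmp) (finCongr hmp)).det :=
          (Matrix.det_submatrix_equiv_self (finCongr hmp) _).symm
        set M := (L.submatrix r c).submatrix (finCongr hmp) (finCongr hmp) with hMdef
        have hMapp : ∀ i j : Fin (m + p), M i j = L (r (finCongr hmp i)) (c (finCongr hmp j)) := by
          intro i j; rfl
        -- top-left block equals contiguous principal minor
        have hTL : (M.submatrix (Fin.castAdd p) (Fin.castAdd p)) =
            (L.submatrix
              (fun i : Fin m => (⟨A + i, by have := i.isLt; omega⟩ : Fin N))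
              (fun i : Fin m => (⟨A + i, by have := i.isLt; omega⟩ : Fin N))) := by
          ext i j
          show L (r (finCongr hmp (Fin.castAdd p i))) (c (finCongr hmp (Fin.castAdd p j))) = _
          have hi : (finCongr hmp (Fin.castAdd p i)) = (⟨i.val, by omega⟩ : Fin (k+1)) := rfl
          have hj : (finCongr hmp (Fin.castAdd p j)) = (⟨j.val, by omega⟩ : Fin (k+1)) := rfl
          rw [hi, hj]
          have h1 := (hmin i.val (by have := i.isLt; omega) (by omega)).1
          have h2 := (hmin j.val (by have := j.isLt; omega) (by omega)).2
          show L _ _ = L _ _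
          congr 1 <;> exact Fin.ext (by assumption)
        have hTLnn : 0 ≤ (M.submatrix (Fin.castAdd p) (Fin.castAdd p)).det := by
          rw [hTL]; exact hP A m hAmN
        -- bottom-right block
        have hBRr : StrictMono (fun i : Fin p => r (finCongr hmp (Fin.natAdd m i))) := by
          intro i j hij
          have hij' := Fin.lt_def.mp hij
          exact hr (show (⟨m + i.val, by have := i.isLt; omega⟩ : Fin (k+1)) <
            ⟨m + j.val, by have := j.isLt; omega⟩ from Fin.mk_lt_mk.mpr (by omega))
        have hBRc : StrictMono (fun i : Fin p => c (finCongr hmp (Fin.natAdd m i))) := by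
          intro i j hij
          have hij' := Fin.lt_def.mp hij
          exact hc (show (⟨m + i.val, by have := i.isLt; omega⟩ : Fin (k+1)) <
            ⟨m + j.val, by have := j.isLt; omega⟩ from Fin.mk_lt_mk.mpr (by omega))
        have hBRnn : 0 ≤ (M.submatrix (Fin.natAdd m) (Fin.natAdd m)).det := by
          have : (M.submatrix (Fin.natAdd m) (Fin.natAdd m)) =
              L.submatrix (fun i : Fin p => r (finCongr hmp (Fin.natAdd m i)))
                (fun i : Fin p => c (finCongr hmp (Fin.natAdd m i))) := rfl
          rw [this]
          exact IH p (by omega) _ _ hBRr hBRc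
        rcases Nat.lt_or_ge (A + m) (c ⟨m, hmk'⟩).val with hcgt | hcle
        · -- c m > A + m : top-right block zero
          have hz : ∀ (i : Fin m) (j : Fin p), M (Fin.castAdd p i) (Fin.natAdd m j) = 0 := by
            intro i j
            rw [hMapp]
            apply hTri
            left
            have hri : (r (finCongr hmp (Fin.castAdd p i))).val = A + i.val := by
              have : (finCongr hmp (Fin.castAdd p i)) = (⟨i.val, by omega⟩ : Fin (k+1)) := rfl
              rw [this]
              exact (hmin i.val (by have := i.isLt; omega) (by omega)).1
            have hcj : (c ⟨m, hmk'⟩).val ≤ (c (finCongr hmp (Fin.natAdd m j))).val := by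
              have : (finCongr hmp (Fin.natAdd m j)) = (⟨m + j.val, by have := j.isLt; omega⟩ : Fin (k+1)) := rfl
              rw [this]
              exact Fin.le_iff_val_le_val.mp (hc.monotone (show (⟨m, hmk'⟩ : Fin (k+1)) ≤
                ⟨m + j.val, by have := j.isLt; omega⟩ from Fin.mk_le_mk.mpr (by omega)))
            have := i.isLt
            omega
          rw [hdet, det_block_zero₁₂ M hz]
          exact mul_nonneg hTLnn hBRnn
        · -- c m = A + m, so r m > A + m : bottom-left block zero
          have hcmeq : (c ⟨m, hmk'⟩).val = A + m := by omega
          have hrmgt : A + m < (r ⟨m, hmk'⟩).val := by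
            rcases hor with h | h
            · omega
            · omega
          have hz : ∀ (i : Fin p) (j : Fin m), M (Fin.natAdd m i) (Fin.castAdd p j) = 0 := by
            intro i j
            rw [hMapp]
            apply hTri
            right
            have hcj : (c (finCongr hmp (Fin.castAdd p j))).val = A + j.val := by
              have : (finCongr hmp (Fin.castAdd p j)) = (⟨j.val, by omega⟩ : Fin (k+1)) := rfl
              rw [this]
              exact (hmin j.val (by have := j.isLt; omega) (by omega)).2
            have hri : (r ⟨m, hmk'⟩).val ≤ (r (finCongr hmp (Fin.natAdd m i))).val := by
              have : (finCongr hmp (Fin.natAdd m i)) = (⟨m + i.val, by have := i.isLt; omega⟩ : Fin (k+1)) := rfl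
              rw [this]
              exact Fin.le_iff_val_le_val.mp (hr.monotone (show (⟨m, hmk'⟩ : Fin (k+1)) ≤
                ⟨m + i.val, by have := i.isLt; omega⟩ from Fin.mk_le_mk.mpr (by omega)))
            have := j.isLt
            omega
          rw [hdet, det_block_zero₂₁ M hz]
          exact mul_nonneg hTLnn hBRnn

theorem stmt0 {N : ℕ} (L : Matrix (Fin N) (Fin N) ℝ) (hTri : Tridiagonal L) :
    TNN L ↔
      ((∀ (a k : ℕ) (hak : a + k ≤ N),
          0 ≤ (L.submatrix
                (fun i : Fin k => ⟨a + i, by have := i.isLt; omega⟩)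
                (fun i : Fin k => ⟨a + i, by have := i.isLt; omega⟩)).det) ∧
        ∀ i j : Fin N, i ≠ j → 0 ≤ L i j) := by
  constructor
  · intro hTNN
    constructor
    · intro a k hak
      exact hTNN k _ _
        (fun i j hij => Fin.mk_lt_mk.mpr (by have := Fin.lt_def.mp hij; omega))
        (fun i j hij => Fin.mk_lt_mk.mpr (by have := Fin.lt_def.mp hij; omega))
    · intro i j hij
      have := hTNN 1 (fun _ => i) (fun _ => j)
        (fun a b hab => absurd hab (by omega))
        (fun a b hab => absurd hab (by omega))
      simpa [Matrix.det_fin_one] using this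
  · rintro ⟨hP, hOff⟩
    intro k r c hr hc
    exact key L hTri hP hOff k r c hr hc
end

section
/- Let L be an N×N real tridiagonal matrix with all off-diagonal entries positive (N ≥ 2). Let λ₁ < ... < λ_N be the eigenvalues of L and μ₁ < ... < μ_{N-1} the eigenvalues of the trailing principal submatrix Q = L[{2,...,N},{2,...,N}]. If the strict interlacing 0 < λ₁ < μ₁ < λ₂ < μ₂ < ... < μ_{N-1} < λ_N holds, then L is totally nonnegative. -/
open Matrix Finset Polynomial

lemma det_scaled {k : ℕ} (e : Fin k → ℝ) (he : ∀ i, e i ≠ 0) (B : Matrix (Fin k) (Fin k) ℝ) :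
    (Matrix.of fun s t => e s * B s t / e t).det = B.det := by
  have hEq : (Matrix.of fun s t => e s * B s t / e t)
      = Matrix.diagonal e * B * Matrix.diagonal (fun t => (e t)⁻¹) := by
    ext s t
    simp [Matrix.mul_diagonal, Matrix.diagonal_mul, div_eq_mul_inv]
  rw [hEq, Matrix.det_mul, Matrix.det_mul, Matrix.det_diagonal, Matrix.det_diagonal,
    mul_right_comm, ← Finset.prod_mul_distrib]
  rw [Finset.prod_congr rfl (fun i _ => mul_inv_cancel₀ (he i)), Finset.prod_const_one, one_mul]

lemma eval_charpoly' {k : ℕ} (M : Matrix (Fin k) (Fin k) ℝ) (x : ℝ) :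
    M.charpoly.eval x = (Matrix.scalar (Fin k) x - M).det := by
  rw [Matrix.charpoly, _root_.eval_det, Matrix.matPolyEquiv_charmatrix]
  simp


open Matrix Finset in
lemma tnn_aux {N : ℕ} (A : Matrix (Fin N) (Fin N) ℝ) (hTri : Tridiagonal A)
    (hadj : ∀ i j : Fin N, ((i : ℕ) = (j : ℕ) + 1 ∨ (j : ℕ) = (i : ℕ) + 1) → 0 ≤ A i j)
    (hprin : ∀ (k : ℕ) (r : Fin k → Fin N), StrictMono r → 0 ≤ (A.submatrix r r).det) :
    TNN A := by
  intro k
  induction k using Nat.strong_induction_on with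
  | _ k ih =>
  rcases k with _ | k
  · intro r c _ _; simp [Matrix.det_fin_zero]
  intro r c hr hc
  set ll : Fin (k + 1) := Fin.last k with hll
  by_cases h1 : (c ll : ℕ) + 1 < (r ll : ℕ)
  · -- last row of the minor vanishes
    have : (A.submatrix r c).det = 0 := by
      apply Matrix.det_eq_zero_of_row_eq_zero ll
      intro j
      apply hTri _ _ (Or.inr _)
      have : (c j : ℕ) ≤ (c ll : ℕ) := by
        exact Fin.le_def.mp (hc.monotone (Fin.le_last j))
      omega
    rw [this]
  by_cases h2 : (r ll : ℕ) + 1 < (c ll : ℕ)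
  · have : (A.submatrix r c).det = 0 := by
      apply Matrix.det_eq_zero_of_column_eq_zero ll
      intro i
      apply hTri _ _ (Or.inl _)
      have : (r i : ℕ) ≤ (r ll : ℕ) := by
        exact Fin.le_def.mp (hr.monotone (Fin.le_last i))
      omega
    rw [this]
  rcases (by omega : (r ll : ℕ) = (c ll : ℕ) + 1 ∨ (c ll : ℕ) = (r ll : ℕ) + 1
      ∨ (r ll : ℕ) = (c ll : ℕ)) with h3 | h3 | h3
  · -- expand along the last row, single nonzero entry at the last column
    rw [Matrix.det_succ_row (A.submatrix r c) ll]
    apply Finset.sum_nonneg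
    intro j _
    by_cases hj : j = ll
    · subst hj
      have hsign : ((-1 : ℝ)) ^ ((ll : ℕ) + (ll : ℕ)) = 1 := by
        rw [← two_mul]; exact (Even.neg_one_pow ⟨(ll : ℕ), by ring⟩)
      rw [hsign, one_mul, Fin.succAbove_last]
      apply mul_nonneg (hadj _ _ (Or.inl h3))
      exact ih k (by omega) (r ∘ Fin.castSucc) (c ∘ Fin.castSucc)
        (hr.comp Fin.strictMono_castSucc) (hc.comp Fin.strictMono_castSucc)
    · have : (A.submatrix r c) ll j = 0 := by
        apply hTri _ _ (Or.inr _)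
        have hjl : j < ll := Fin.lt_last_iff_ne_last.mpr hj
        have : (c j : ℕ) < (c ll : ℕ) := hc hjl
        omega
      rw [this]; ring_nf; simp [this]
  · -- expand along the last column
    rw [Matrix.det_succ_column (A.submatrix r c) ll]
    apply Finset.sum_nonneg
    intro i _
    by_cases hi : i = ll
    · subst hi
      have hsign : ((-1 : ℝ)) ^ ((ll : ℕ) + (ll : ℕ)) = 1 := by
        rw [← two_mul]; exact (Even.neg_one_pow ⟨(ll : ℕ), by ring⟩)
      rw [hsign, one_mul, Fin.succAbove_last]
      apply mul_nonneg (hadj _ _ (Or.inr h3))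
      exact ih k (by omega) (r ∘ Fin.castSucc) (c ∘ Fin.castSucc)
        (hr.comp Fin.strictMono_castSucc) (hc.comp Fin.strictMono_castSucc)
    · have : (A.submatrix r c) i ll = 0 := by
        apply hTri _ _ (Or.inl _)
        have hil : i < ll := Fin.lt_last_iff_ne_last.mpr hi
        have : (r i : ℕ) < (r ll : ℕ) := hr hil
        omega
      rw [this]; ring_nf; simp [this]
  · -- r ll = c ll : split at the first index from which r and c agree
    classical
    have hex : ∃ j : ℕ, ∀ s : Fin (k + 1), j ≤ (s : ℕ) → r s = c s := by
      refine ⟨k, fun s hs => ?_⟩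
      have : s = ll := Fin.ext (le_antisymm (Nat.lt_succ_iff.mp s.isLt) hs)
      rw [this]; exact Fin.ext h3
    set j0 := Nat.find hex with hj0
    have hP : ∀ s : Fin (k + 1), j0 ≤ (s : ℕ) → r s = c s := Nat.find_spec hex
    have hj0k : j0 ≤ k := Nat.find_min' hex (by
      intro s hs
      have : s = ll := Fin.ext (le_antisymm (Nat.lt_succ_iff.mp s.isLt) hs)
      rw [this]; exact Fin.ext h3)
    rcases Nat.eq_zero_or_pos j0 with hz | hpos
    · have : c = r := funext fun s => (hP s (by omega)).symm
      rw [this]; exact hprin _ r hr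
    · obtain ⟨t, ht⟩ : ∃ t, j0 = t + 1 := ⟨j0 - 1, by omega⟩
      have hnot : ¬ (∀ s : Fin (k + 1), t ≤ (s : ℕ) → r s = c s) :=
        Nat.find_min hex (by omega)
      push_neg at hnot
      obtain ⟨s, hts, hrcs⟩ := hnot
      have hst : (s : ℕ) = t := by
        by_contra hne
        exact hrcs (hP s (by omega))
      -- block decomposition
      set m := k + 1 - j0 with hm
      have hjm : j0 + m = k + 1 := by omega
      set e : Fin j0 ⊕ Fin m ≃ Fin (k + 1) := finSumFinEquiv.trans (finCongr hjm) with he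
      have heL : ∀ a : Fin j0, ((e (Sum.inl a) : ℕ)) = (a : ℕ) := by
        intro a; simp [he]
      have heR : ∀ b : Fin m, ((e (Sum.inr b) : ℕ)) = j0 + (b : ℕ) := by
        intro b; simp [he]
      have hdet : (A.submatrix r c).det = ((A.submatrix r c).submatrix e e).det :=
        (Matrix.det_submatrix_equiv_self e _).symm
      have hsplitL : StrictMono (fun a : Fin j0 => r (e (Sum.inl a))) := by
        intro a b hab; apply hr; rw [Fin.lt_def, heL, heL]; exact_mod_cast hab
      have hsplitcL : StrictMono (fun a : Fin j0 => c (e (Sum.inl a))) := by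
        intro a b hab; apply hc; rw [Fin.lt_def, heL, heL]; exact_mod_cast hab
      have hsplitR : StrictMono (fun b : Fin m => r (e (Sum.inr b))) := by
        intro a b hab; apply hr; rw [Fin.lt_def, heR, heR]; omega
      have htail : (fun b : Fin m => c (e (Sum.inr b))) = fun b => r (e (Sum.inr b)) := by
        funext b; exact (hP _ (by rw [heR]; omega)).symm
      have hheadnn : 0 ≤ (A.submatrix (fun a : Fin j0 => r (e (Sum.inl a)))
          (fun a : Fin j0 => c (e (Sum.inl a)))).det :=
        ih j0 (by omega) _ _ hsplitL hsplitcL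
      have htailnn : 0 ≤ (A.submatrix (fun b : Fin m => r (e (Sum.inr b)))
          (fun b : Fin m => c (e (Sum.inr b)))).det := by
        rw [show (A.submatrix (fun b : Fin m => r (e (Sum.inr b)))
            (fun b : Fin m => c (e (Sum.inr b)))) = A.submatrix
            (fun b : Fin m => r (e (Sum.inr b))) (fun b => r (e (Sum.inr b))) by rw [htail]]
        exact hprin m _ hsplitR
      rcases lt_or_gt_of_ne (fun hh => hrcs hh) with hlt | hgt
      · -- r s < c s : upper-right block vanishes, block lower triangular
        have hblk : ((A.submatrix r c).submatrix e e).toBlocks₁₂ = 0 := by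
          ext a b
          show A (r (e (Sum.inl a))) (c (e (Sum.inr b))) = 0
          apply hTri _ _ (Or.inl _)
          have h1 : (e (Sum.inl a) : ℕ) ≤ (s : ℕ) := by rw [heL]; omega
          have h2 : (s : ℕ) < (e (Sum.inr b) : ℕ) := by rw [heR]; omega
          have h3' : (r (e (Sum.inl a)) : ℕ) ≤ (r s : ℕ) :=
            Fin.le_def.mp (hr.monotone (Fin.le_def.mpr h1))
          have h4 : (c s : ℕ) < (c (e (Sum.inr b)) : ℕ) := hc (Fin.lt_def.mpr h2)
          have h5 : (r s : ℕ) < (c s : ℕ) := hlt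
          omega
        rw [hdet, ← Matrix.fromBlocks_toBlocks ((A.submatrix r c).submatrix e e), hblk,
          Matrix.det_fromBlocks_zero₁₂]
        exact mul_nonneg hheadnn htailnn
      · -- c s < r s : lower-left block vanishes
        have hblk : ((A.submatrix r c).submatrix e e).toBlocks₂₁ = 0 := by
          ext b a
          show A (r (e (Sum.inr b))) (c (e (Sum.inl a))) = 0
          apply hTri _ _ (Or.inr _)
          have h1 : (e (Sum.inl a) : ℕ) ≤ (s : ℕ) := by rw [heL]; omega
          have h2 : (s : ℕ) < (e (Sum.inr b) : ℕ) := by rw [heR]; omega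
          have h3' : (c (e (Sum.inl a)) : ℕ) ≤ (c s : ℕ) :=
            Fin.le_def.mp (hc.monotone (Fin.le_def.mpr h1))
          have h4 : (r s : ℕ) < (r (e (Sum.inr b)) : ℕ) := hr (Fin.lt_def.mpr h2)
          have h5 : (c s : ℕ) < (r s : ℕ) := hgt
          omega
        rw [hdet, ← Matrix.fromBlocks_toBlocks ((A.submatrix r c).submatrix e e), hblk,
          Matrix.det_fromBlocks_zero₂₁]
        exact mul_nonneg hheadnn htailnn



theorem stmt7 {n : ℕ} (L : Matrix (Fin (n + 2)) (Fin (n + 2)) ℝ)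
    (hTri : Tridiagonal L)
    (hoff : ∀ i : Fin (n + 1), 0 < L i.castSucc i.succ ∧ 0 < L i.succ i.castSucc)
    (lam : Fin (n + 2) → ℝ) (mu : Fin (n + 1) → ℝ)
    (hlam : L.charpoly = ∏ i, (Polynomial.X - Polynomial.C (lam i)))
    (hmu : (L.submatrix Fin.succ Fin.succ).charpoly
      = ∏ i, (Polynomial.X - Polynomial.C (mu i)))
    (hlmono : StrictMono lam) (hmumono : StrictMono mu)
    (hinter : 0 < lam 0 ∧
      ∀ i : Fin (n + 1), lam i.castSucc < mu i ∧ mu i < lam i.succ) :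
    TNN L := by
  have hlam0 : 0 < lam 0 := hinter.1
  have hprinL : ∀ (k : ℕ) (r : Fin k → Fin (n+2)), StrictMono r →
      0 ≤ (L.submatrix r r).det := by
    classical
    set g : ℕ → ℝ := fun t => if h : t < n + 1 then
        Real.sqrt (L (Fin.castSucc ⟨t, h⟩) (Fin.succ ⟨t, h⟩)
          / L (Fin.succ ⟨t, h⟩) (Fin.castSucc ⟨t, h⟩))
      else 1 with hgdef
    have hg : ∀ t, 0 < g t := by
      intro t; rw [hgdef]; dsimp only; split
      · next h => exact Real.sqrt_pos.mpr (div_pos (hoff ⟨t, h⟩).1 (hoff ⟨t, h⟩).2)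
      · exact one_pos
    set d : ℕ → ℝ := fun m => ∏ t ∈ Finset.range m, g t with hddef
    have hd : ∀ m, 0 < d m := fun m => Finset.prod_pos (fun t _ => hg t)
    set S : Matrix (Fin (n + 2)) (Fin (n + 2)) ℝ :=
      Matrix.of (fun i j => d (i : ℕ) * L i j / d (j : ℕ)) with hSdef
    have hmain : ∀ i j : Fin (n + 2), (i : ℕ) < (j : ℕ) →
        d (j : ℕ) * L j i / d (i : ℕ) = d (i : ℕ) * L i j / d (j : ℕ) := by
      intro i j hij
      by_cases hadj : (j : ℕ) = (i : ℕ) + 1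
      · have hin : (i : ℕ) < n + 1 := by omega
        set t : Fin (n + 1) := ⟨(i : ℕ), hin⟩ with htdef
        have hic : i = t.castSucc := Fin.ext rfl
        have hjs : j = t.succ := Fin.ext (by simp [htdef, hadj])
        set b := L t.castSucc t.succ with hbdef
        set cc := L t.succ t.castSucc with hccdef
        have hb : 0 < b := (hoff t).1
        have hcpos : 0 < cc := (hoff t).2
        have hgi : g (i : ℕ) = Real.sqrt (b / cc) := by
          rw [hgdef]; dsimp only; rw [dif_pos hin]
        have hgsq : g (i : ℕ) * g (i : ℕ) = b / cc := by
          rw [hgi]; exact Real.mul_self_sqrt (le_of_lt (div_pos hb hcpos))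
        have hdj : d (j : ℕ) = d (i : ℕ) * g (i : ℕ) := by
          rw [hadj, hddef]; exact Finset.prod_range_succ g (i : ℕ)
        have hLji : L j i = cc := by rw [hic, hjs]
        have hLij : L i j = b := by rw [hic, hjs]
        rw [hLji, hLij, div_eq_div_iff (ne_of_gt (hd _)) (ne_of_gt (hd _)), hdj]
        have hkey : g (i : ℕ) * g (i : ℕ) * cc = b := by
          rw [hgsq]; field_simp
        linear_combination (d (i : ℕ))^2 * hkey
      · have h2 : (i : ℕ) + 1 < (j : ℕ) := by omega
        rw [hTri i j (Or.inl h2), hTri j i (Or.inr h2)]; simp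
    have hsymm : ∀ i j : Fin (n + 2), S j i = S i j := by
      intro i j
      rcases lt_trichotomy (i : ℕ) (j : ℕ) with h | h | h
      · simpa [hSdef] using hmain i j h
      · rw [Fin.ext h]
      · simpa [hSdef] using (hmain j i h).symm
    have hS : S.IsHermitian := by
      show Sᴴ = S
      ext i j
      rw [Matrix.conjTranspose_apply, star_trivial]
      exact hsymm i j
    have hSL : ∀ (k : ℕ) (r : Fin k → Fin (n + 2)),
        (S.submatrix r r).det = (L.submatrix r r).det := by
      intro k r
      have h : S.submatrix r r = Matrix.of
          (fun s t => d ((r s : ℕ)) * (L.submatrix r r) s t / d ((r t : ℕ))) := rfl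
      rw [h, det_scaled (fun s => d ((r s : ℕ))) (fun s => ne_of_gt (hd _))]
    have heig : ∀ i, 0 ≤ hS.eigenvalues i := by
      intro i
      have hmem := hS.eigenvalues_mem_spectrum_real i
      rw [spectrum.mem_iff] at hmem
      set μ := hS.eigenvalues i with hmu
      have halg : algebraMap ℝ (Matrix (Fin (n + 2)) (Fin (n + 2)) ℝ) μ
          = Matrix.scalar (Fin (n + 2)) μ := by
        rw [Matrix.scalar_apply, Matrix.algebraMap_eq_diagonal]; rfl
      have hdet0 : (Matrix.scalar (Fin (n + 2)) μ - S).det = 0 := by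
        by_contra hne
        exact hmem (halg ▸ (Matrix.isUnit_iff_isUnit_det _).mpr (Ne.isUnit hne))
      have hSL2 : (Matrix.scalar (Fin (n + 2)) μ - S) = Matrix.of
          (fun a b : Fin (n + 2) => d (a : ℕ) * ((Matrix.scalar (Fin (n + 2)) μ - L) a b) / d (b : ℕ)) := by
        ext a b
        by_cases hab : a = b
        · subst hab
          have hda := ne_of_gt (hd (a : ℕ))
          simp only [Matrix.sub_apply, Matrix.scalar_apply, Matrix.diagonal_apply_eq,
            Matrix.of_apply, hSdef]
          field_simp
        · simp only [Matrix.sub_apply, Matrix.scalar_apply, Matrix.diagonal_apply_ne _ hab,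
            Matrix.of_apply, hSdef]
          ring
      have h2 : (Matrix.scalar (Fin (n + 2)) μ - L).det = 0 := by
        rw [hSL2, det_scaled (fun a : Fin (n+2) => d ((a : ℕ))) (fun s => ne_of_gt (hd _))]
          at hdet0
        exact hdet0
      have h3 : ∏ j, (μ - lam j) = 0 := by
        have h := eval_charpoly' L μ
        rw [hlam, h2] at h
        simpa [Polynomial.eval_prod] using h
      obtain ⟨j, -, hj⟩ := Finset.prod_eq_zero_iff.mp h3
      have hmuj : μ = lam j := by linarith [sub_eq_zero.mp hj]
      have : lam 0 ≤ lam j := hlmono.monotone (Fin.zero_le j)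
      rw [hmuj]; linarith
    have hpsd : S.PosSemidef := hS.posSemidef_iff_eigenvalues_nonneg.mpr heig
    intro k r hr
    rw [← hSL k r]
    have hsub : (S.submatrix r r).PosSemidef := hpsd.submatrix r
    rw [hsub.isHermitian.det_eq_prod_eigenvalues]
    exact Finset.prod_nonneg (fun i _ => hsub.eigenvalues_nonneg i)
  have hadjL : ∀ i j : Fin (n + 2), ((i : ℕ) = (j : ℕ) + 1 ∨ (j : ℕ) = (i : ℕ) + 1) →
      0 ≤ L i j := by
    intro i j hij
    rcases hij with h | h
    · have hjn : (j : ℕ) < n + 1 := by omega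
      set t : Fin (n + 1) := ⟨(j : ℕ), hjn⟩ with htdef
      have hi : i = t.succ := Fin.ext (by simp [htdef]; omega)
      have hj : j = t.castSucc := Fin.ext rfl
      rw [hi, hj]; exact (hoff t).2.le
    · have hin : (i : ℕ) < n + 1 := by omega
      set t : Fin (n + 1) := ⟨(i : ℕ), hin⟩ with htdef
      have hi : i = t.castSucc := Fin.ext rfl
      have hj : j = t.succ := Fin.ext (by simp [htdef]; omega)
      rw [hi, hj]; exact (hoff t).1.le
  exact tnn_aux L hTri hadjL hprinL
end

section
/- Let L be an N×N real tridiagonal matrix with all off-diagonal entries positive. If L is totally nonnegative with eigenvalues λ₁ < ... < λ_N and the trailing principal submatrix Q = L[{2,...,N},{2,...,N}] has eigenvalues μ₁ < ... < μ_{N-1}, and similarly the leading principal submatrix Q' = L[{1,...,N-1},{1,...,N-1}] has eigenvalues μ'₁ < ... < μ'_{N-1}, then the interlacing with Q holds if and only if the interlacing with Q' holds (both being equivalent to total nonnegativity of L). -/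
lemma eval_charpoly_det {N : ℕ} (M : Matrix (Fin N) (Fin N) ℝ) (t : ℝ) :
    M.charpoly.eval t = (t • (1 : Matrix (Fin N) (Fin N) ℝ) - M).det := by
  rw [Matrix.charpoly, ← Polynomial.coe_evalRingHom, RingHom.map_det]
  congr 1
  ext i j
  by_cases h : i = j
  · subst h
    simp [Matrix.charmatrix_apply_eq, Matrix.one_apply_eq]
  · simp [Matrix.charmatrix_apply_ne _ _ _ h, Matrix.one_apply_ne h]

lemma smul_one_sub_submatrix {N k : ℕ} (M : Matrix (Fin N) (Fin N) ℝ) (f : Fin k → Fin N)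
    (hf : Function.Injective f) (t : ℝ) :
    (t • (1:Matrix (Fin N) (Fin N) ℝ) - M).submatrix f f = t • 1 - M.submatrix f f := by
  ext i j
  simp [Matrix.submatrix_apply, Matrix.sub_apply, Matrix.one_apply, hf.eq_iff]

lemma sign_transfer {s g g' c : ℝ} (h1 : 0 < s * g) (h2 : g * g' = c) (hc : 0 < c) :
    0 < s * g' := by
  have hg : g ≠ 0 := by
    rintro rfl
    rw [zero_mul] at h2
    exact absurd h2.symm (ne_of_gt hc)
  have h3 : 0 < (s * g) * (g * g') := by rw [h2]; exact mul_pos h1 hc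
  have hg2 : 0 < g * g := mul_pos_iff.mpr (by rcases hg.lt_or_gt with h | h; exact Or.inr ⟨h, h⟩; exact Or.inl ⟨h, h⟩)
  nlinarith [h3, hg2]
open Finset

lemma prod_sign {k : ℕ} (a : ℝ) (v : Fin k → ℝ) (hne : ∀ j, v j ≠ a) :
    0 < (-1:ℝ)^((Finset.univ.filter fun j => a < v j).card) * ∏ j, (a - v j) := by
  classical
  rw [← Finset.prod_filter_mul_prod_filter_not Finset.univ (fun j => a < v j) (fun j => a - v j),
    ← mul_assoc]
  have h1 : (-1:ℝ)^((Finset.univ.filter fun j => a < v j).card) *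
      ∏ j ∈ Finset.univ.filter fun j => a < v j, (a - v j)
      = ∏ j ∈ Finset.univ.filter fun j => a < v j, (v j - a) := by
    rw [← Finset.prod_const (-1:ℝ)]
    rw [← Finset.prod_mul_distrib]
    exact Finset.prod_congr rfl fun j _ => by ring
  rw [h1]
  apply mul_pos
  · exact Finset.prod_pos fun j hj => by
      simp only [Finset.mem_filter] at hj; linarith [hj.2]
  · exact Finset.prod_pos fun j hj => by
      simp only [Finset.mem_filter, not_lt] at hj
      have := hj.2
      have := hne j
      cases lt_or_eq_of_le hj.2 with
      | inl h => linarith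
      | inr h => exact absurd h (hne j)

lemma parity_of_sign {e1 e2 : ℕ} {P : ℝ} (h1 : 0 < (-1:ℝ)^e1 * P) (h2 : 0 < (-1:ℝ)^e2 * P) :
    e1 % 2 = e2 % 2 := by
  rcases Nat.even_or_odd e1 with he1 | he1 <;> rcases Nat.even_or_odd e2 with he2 | he2
  · rw [Nat.even_iff] at he1 he2; omega
  · exfalso; rw [he1.neg_one_pow] at h1; rw [he2.neg_one_pow] at h2; linarith
  · exfalso; rw [he1.neg_one_pow] at h1; rw [he2.neg_one_pow] at h2; linarith
  · rw [Nat.odd_iff] at he1 he2; omega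

lemma card_filter_le_val (k a : ℕ) :
    ((Finset.univ : Finset (Fin k)).filter fun j : Fin k => a ≤ (j:ℕ)).card = k - a := by
  rw [Finset.card_filter]
  rw [Fin.sum_univ_eq_sum_range (fun j => if a ≤ j then 1 else 0) k]
  rw [← Finset.card_filter]
  have : (Finset.range k).filter (fun j => a ≤ j) = Finset.Ico a k := by
    ext x
    simp only [Finset.mem_filter, Finset.mem_range, Finset.mem_Ico]
    omega
  rw [this, Nat.card_Ico]

lemma interlace_iff_sign {m : ℕ} (lam : Fin (m+2) → ℝ) (mu : Fin (m+1) → ℝ)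
    (hl : StrictMono lam) (hm : StrictMono mu) :
    (∀ i : Fin (m+1), lam i.castSucc < mu i ∧ mu i < lam i.succ) ↔
    (∀ i : Fin (m+2), 0 < (-1:ℝ)^(m+1-(i:ℕ)) * ∏ j, (lam i - mu j)) := by
  constructor
  · intro h i
    have hiff : ∀ j : Fin (m+1), lam i < mu j ↔ (i:ℕ) ≤ (j:ℕ) := by
      intro j
      constructor
      · intro hij
        by_contra hc
        have hji : (j:ℕ) + 1 ≤ (i:ℕ) := by omega
        have hle : lam j.succ ≤ lam i :=
          hl.monotone (by simp only [Fin.le_def, Fin.val_succ]; omega)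
        linarith [(h j).2]
      · intro hij
        have hle : lam i ≤ lam j.castSucc :=
          hl.monotone (by simp only [Fin.le_def, Fin.coe_castSucc]; omega)
        linarith [(h j).1]
    have hne : ∀ j, mu j ≠ lam i := by
      intro j he
      rcases le_or_gt (i:ℕ) (j:ℕ) with hij | hij
      · have := (hiff j).mpr hij
        rw [he] at this
        exact lt_irrefl _ this
      · have hle : lam j.succ ≤ lam i :=
          hl.monotone (by simp only [Fin.le_def, Fin.val_succ]; omega)
        rw [← he] at hle
        linarith [(h j).2]
    have hps := prod_sign (lam i) mu hne
    have hcard : (Finset.univ.filter fun j : Fin (m+1) => lam i < mu j).card = m+1-(i:ℕ) := by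
      have heq : (Finset.univ.filter fun j : Fin (m+1) => lam i < mu j)
          = Finset.univ.filter fun j : Fin (m+1) => (i:ℕ) ≤ (j:ℕ) := by
        apply Finset.filter_congr
        intro j _
        simp [hiff j]
      rw [heq, card_filter_le_val]
    rwa [hcard] at hps
  · intro h
    have hgne : ∀ i : Fin (m+2), (∏ j, (lam i - mu j)) ≠ 0 := by
      intro i hz
      have := h i
      rw [hz, mul_zero] at this
      exact lt_irrefl 0 this
    have hne : ∀ (i : Fin (m+2)) (j : Fin (m+1)), mu j ≠ lam i := by
      intro i j he
      exact hgne i (Finset.prod_eq_zero (Finset.mem_univ j) (by rw [he]; ring))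
    set c : Fin (m+2) → ℕ :=
      fun i => (Finset.univ.filter fun j : Fin (m+1) => lam i < mu j).card with hcdef
    have hpar : ∀ i : Fin (m+2), c i % 2 = (m+1-(i:ℕ)) % 2 := fun i =>
      parity_of_sign (prod_sign (lam i) mu (hne i)) (h i)
    have hstep : ∀ i : Fin (m+1), c i.succ < c i.castSucc := by
      intro i
      have hsub : (Finset.univ.filter fun j : Fin (m+1) => lam i.succ < mu j)
          ⊆ (Finset.univ.filter fun j : Fin (m+1) => lam i.castSucc < mu j) := by
        intro j hj
        simp only [Finset.mem_filter, Finset.mem_univ, true_and] at hj ⊢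
        have : lam i.castSucc < lam i.succ := hl (Fin.castSucc_lt_succ (i := i))
        linarith
      have hle : c i.succ ≤ c i.castSucc := Finset.card_le_card hsub
      have h1 := hpar i.succ
      have h2 := hpar i.castSucc
      simp only [Fin.val_succ, Fin.coe_castSucc] at h1 h2
      have hik : (i:ℕ) ≤ m := by omega
      omega
    have hub : ∀ i : Fin (m+2), c i ≤ m+1 := by
      intro i
      calc c i ≤ (Finset.univ : Finset (Fin (m+1))).card := Finset.card_filter_le _ _
      _ = m+1 := by simp
    have claim1 : ∀ i : Fin (m+2), c i + (i:ℕ) ≤ m+1 := by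
      intro i
      induction i using Fin.induction with
      | zero => simpa using hub 0
      | succ i ih =>
        have h1 := hstep i
        simp only [Fin.val_succ, Fin.coe_castSucc] at ih ⊢
        omega
    have claim2 : ∀ i : Fin (m+2), m+1 ≤ c i + (i:ℕ) := by
      intro i
      induction i using Fin.reverseInduction with
      | last => simp only [Fin.val_last]; omega
      | cast i ih =>
        have h1 := hstep i
        simp only [Fin.val_succ, Fin.coe_castSucc] at ih ⊢
        omega
    have hcval : ∀ i : Fin (m+2), c i + (i:ℕ) = m+1 := fun i =>
      le_antisymm (claim1 i) (claim2 i)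
    intro k
    constructor
    · by_contra hq
      have hlt : mu k < lam k.castSucc := lt_of_le_of_ne (not_lt.mp hq) (hne _ _)
      have hsub : (Finset.univ.filter fun j : Fin (m+1) => lam k.castSucc < mu j)
          ⊆ Finset.Ioi k := by
        intro j hj
        simp only [Finset.mem_filter] at hj
        simp only [Finset.mem_Ioi]
        by_contra hle
        have : mu j ≤ mu k := hm.monotone (not_lt.mp hle)
        linarith [hj.2]
      have hcard : c k.castSucc ≤ (Finset.Ioi k).card := Finset.card_le_card hsub
      rw [Fin.card_Ioi] at hcard
      have hv := hcval k.castSucc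
      simp only [Fin.coe_castSucc] at hv
      have hk : (k:ℕ) ≤ m := by omega
      omega
    · by_contra hq
      have hlt : lam k.succ < mu k := lt_of_le_of_ne (not_lt.mp hq) (hne _ _).symm
      have hsub : Finset.Ici k
          ⊆ (Finset.univ.filter fun j : Fin (m+1) => lam k.succ < mu j) := by
        intro j hj
        simp only [Finset.mem_Ici] at hj
        simp only [Finset.mem_filter, Finset.mem_univ, true_and]
        have : mu k ≤ mu j := hm.monotone hj
        linarith
      have hcard : (Finset.Ici k).card ≤ c k.succ := Finset.card_le_card hsub
      rw [Fin.card_Ici] at hcard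
      have hv := hcval k.succ
      simp only [Fin.val_succ] at hv
      have hk : (k:ℕ) ≤ m := by omega
      omega


open Matrix Finset in
lemma tri_expand (n : ℕ) (A : Matrix (Fin (n+2)) (Fin (n+2)) ℝ) (hA : Tridiagonal A) :
    A.det = A 0 0 * (A.submatrix Fin.succ Fin.succ).det
      - A 0 1 * (A 1 0 *
        (A.submatrix (fun j : Fin n => j.succ.succ) (fun j : Fin n => j.succ.succ)).det) := by
  rw [det_succ_row_zero]
  rw [Fin.sum_univ_succ, Fin.sum_univ_succ]
  have h0 : ∀ j : Fin n, A 0 j.succ.succ = 0 := fun j => hA _ _ (by left; simp)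
  simp only [h0, mul_zero, zero_mul, Finset.sum_const_zero, add_zero]
  have hs0 : (0 : Fin (n+2)).succAbove = Fin.succ := Fin.succAbove_zero
  rw [hs0]
  -- second term: expand the minor along its first column
  have hminor : (A.submatrix Fin.succ (Fin.succAbove 1)).det
      = A 1 0 * (A.submatrix (fun j : Fin n => j.succ.succ) (fun j : Fin n => j.succ.succ)).det := by
    rw [det_succ_column_zero]
    rw [Fin.sum_univ_succ]
    have hcol : ∀ i : Fin n, (A.submatrix Fin.succ (Fin.succAbove 1)) i.succ 0 = 0 := by
      intro i
      have : (1 : Fin (n+2)).succAbove 0 = 0 := by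
        rw [Fin.succAbove_of_castSucc_lt]
        · rfl
        · simp
      simp only [submatrix_apply, this]
      exact hA _ _ (by right; simp)
    simp only [hcol, mul_zero, zero_mul, Finset.sum_const_zero, add_zero]
    have h10 : (1 : Fin (n+2)).succAbove 0 = 0 := by
      rw [Fin.succAbove_of_castSucc_lt] <;> simp
    have hcomp : ((A.submatrix Fin.succ (Fin.succAbove 1)).submatrix (Fin.succAbove 0) Fin.succ)
        = A.submatrix (fun j : Fin n => j.succ.succ) (fun j : Fin n => j.succ.succ) := by
      ext i j
      simp only [submatrix_apply, Fin.succAbove_zero]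
      rw [Fin.succAbove_of_le_castSucc _ _ (by rw [Fin.le_def]; simp)]
    rw [hcomp]
    simp [h10]
  simp only [Fin.succ_zero_eq_one] at *
  rw [hminor]
  simp only [Fin.val_zero, Fin.val_one, pow_zero, pow_one]
  ring



lemma tri_sub {N k : ℕ} (A : Matrix (Fin N) (Fin N) ℝ) (hA : Tridiagonal A)
    (f : Fin k → Fin N) (hf : ∀ i j : Fin k, ((i:ℕ)+1 < j ∨ (j:ℕ)+1 < i) →
      ((f i : ℕ)+1 < f j ∨ (f j : ℕ)+1 < f i)) :
    Tridiagonal (A.submatrix f f) :=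
  fun i j h => hA _ _ (hf i j h)

lemma tri_sub_succ {N : ℕ} (A : Matrix (Fin (N+1)) (Fin (N+1)) ℝ) (hA : Tridiagonal A) :
    Tridiagonal (A.submatrix Fin.succ Fin.succ) :=
  tri_sub A hA _ (by intro i j h; simp only [Fin.val_succ]; omega)

lemma tri_sub_castSucc {N : ℕ} (A : Matrix (Fin (N+1)) (Fin (N+1)) ℝ) (hA : Tridiagonal A) :
    Tridiagonal (A.submatrix Fin.castSucc Fin.castSucc) :=
  tri_sub A hA _ (by intro i j h; simp only [Fin.coe_castSucc]; omega)

open Matrix Finset in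
lemma tri_det : ∀ (n : ℕ) (A : Matrix (Fin (n+2)) (Fin (n+2)) ℝ), Tridiagonal A →
    A.det * (A.submatrix (fun j : Fin n => j.succ.castSucc) (fun j : Fin n => j.succ.castSucc)).det
    = (A.submatrix Fin.succ Fin.succ).det * (A.submatrix Fin.castSucc Fin.castSucc).det
      - ∏ i : Fin (n+1), (A i.castSucc i.succ * A i.succ i.castSucc) := by
  intro n
  induction n with
  | zero =>
    intro A _
    simp [Matrix.det_fin_two, Matrix.det_fin_one, Fin.prod_univ_succ]
    ring
  | succ n ih =>
    intro A hA
    have hP := tri_expand (n+1) A hA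
    have hQ' := tri_expand n (A.submatrix Fin.castSucc Fin.castSucc) (tri_sub_castSucc A hA)
    have hIH := ih (A.submatrix Fin.succ Fin.succ) (tri_sub_succ A hA)
    simp only [Matrix.submatrix_submatrix, Matrix.submatrix_apply, Function.comp_def,
      Fin.succ_castSucc, Fin.castSucc_zero, Fin.castSucc_one] at hQ' hIH
    rw [Fin.prod_univ_succ]
    simp only [Fin.castSucc_zero, Fin.succ_zero_eq_one, Fin.succ_castSucc]
    linear_combination
      (A.submatrix (fun j : Fin (n+1) => j.succ.castSucc) (fun j : Fin (n+1) => j.succ.castSucc)).det * hP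
      - (A.submatrix Fin.succ Fin.succ).det * hQ' + A 0 1 * A 1 0 * hIH

theorem stmt8 {n : ℕ} (L : Matrix (Fin (n + 2)) (Fin (n + 2)) ℝ)
    (hTri : Tridiagonal L)
    (hoff : ∀ i : Fin (n + 1), 0 < L i.castSucc i.succ ∧ 0 < L i.succ i.castSucc)
    (hTNN : TNN L)
    (lam : Fin (n + 2) → ℝ) (mu mu' : Fin (n + 1) → ℝ)
    (hlam : L.charpoly = ∏ i, (Polynomial.X - Polynomial.C (lam i)))
    (hmu : (L.submatrix Fin.succ Fin.succ).charpoly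
      = ∏ i, (Polynomial.X - Polynomial.C (mu i)))
    (hmu' : (L.submatrix Fin.castSucc Fin.castSucc).charpoly
      = ∏ i, (Polynomial.X - Polynomial.C (mu' i)))
    (hlmono : StrictMono lam) (hmumono : StrictMono mu) (hmu'mono : StrictMono mu') :
    ((0 < lam 0 ∧ ∀ i : Fin (n + 1), lam i.castSucc < mu i ∧ mu i < lam i.succ) ↔
     (0 < lam 0 ∧ ∀ i : Fin (n + 1), lam i.castSucc < mu' i ∧ mu' i < lam i.succ)) := by
  have hc0 : 0 < ∏ i : Fin (n+1), (L i.castSucc i.succ * L i.succ i.castSucc) :=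
    Finset.prod_pos fun i _ => mul_pos (hoff i).1 (hoff i).2
  have key : ∀ k : Fin (n+2),
      (∏ j, (lam k - mu j)) * (∏ j, (lam k - mu' j))
        = ∏ i : Fin (n+1), (L i.castSucc i.succ * L i.succ i.castSucc) := by
    intro k
    set t := lam k with htdef
    set A := t • (1 : Matrix (Fin (n+2)) (Fin (n+2)) ℝ) - L with hAdef
    have hAtri : Tridiagonal A := by
      intro i j hij
      have hne : i ≠ j := by
        intro he
        rw [he] at hij
        omega
      rw [hAdef]
      simp [Matrix.sub_apply, Matrix.one_apply_ne hne, hTri i j hij]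
    have hid := tri_det n A hAtri
    have hdetA : A.det = ∏ j, (t - lam j) := by
      rw [hAdef, ← eval_charpoly_det, hlam]
      simp [Polynomial.eval_prod]
    have hzero : (∏ j, (t - lam j)) = 0 :=
      Finset.prod_eq_zero (Finset.mem_univ k) (by rw [htdef]; ring)
    have hQ : (A.submatrix Fin.succ Fin.succ).det = ∏ j, (t - mu j) := by
      rw [hAdef, smul_one_sub_submatrix _ _ (Fin.succ_injective _) t,
        ← eval_charpoly_det, hmu]
      simp [Polynomial.eval_prod]
    have hQ' : (A.submatrix Fin.castSucc Fin.castSucc).det = ∏ j, (t - mu' j) := by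
      rw [hAdef, smul_one_sub_submatrix _ _ (Fin.castSucc_injective _) t,
        ← eval_charpoly_det, hmu']
      simp [Polynomial.eval_prod]
    have hoffA : (∏ i : Fin (n+1), (A i.castSucc i.succ * A i.succ i.castSucc))
        = ∏ i : Fin (n+1), (L i.castSucc i.succ * L i.succ i.castSucc) := by
      apply Finset.prod_congr rfl
      intro i _
      have hne1 : i.castSucc ≠ i.succ := (Fin.castSucc_lt_succ (i := i)).ne
      have h1 : A i.castSucc i.succ = - L i.castSucc i.succ := by
        rw [hAdef]; simp [Matrix.sub_apply, Matrix.one_apply_ne hne1]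
      have h2 : A i.succ i.castSucc = - L i.succ i.castSucc := by
        rw [hAdef]; simp [Matrix.sub_apply, Matrix.one_apply_ne hne1.symm]
      rw [h1, h2]; ring
    rw [hdetA, hzero, hQ, hQ', hoffA, zero_mul] at hid
    linarith [hid]
  rw [and_congr_right_iff]
  intro _
  rw [interlace_iff_sign lam mu hlmono hmumono,
    interlace_iff_sign lam mu' hlmono hmu'mono]
  constructor
  · intro h i
    exact sign_transfer (h i) (key i) hc0
  · intro h i
    have hk : (∏ j, (lam i - mu' j)) * (∏ j, (lam i - mu j))
        = ∏ i : Fin (n+1), (L i.castSucc i.succ * L i.succ i.castSucc) := by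
      rw [mul_comm]; exact key i
    exact sign_transfer (h i) hk hc0
end

section
/- Let L be an N×N real tridiagonal matrix with all off-diagonal entries positive, with distinct eigenvalues 0 < λ₁ < ... < λ_N. Let X₁(λ) = det((L − λE)[{2,...,N},{2,...,N}]) be the (1,1)-cofactor polynomial. Then L is totally nonnegative if and only if (−1)^{i−1} X₁(λ_i) > 0 for every i = 1, ..., N. -/
open Matrix Polynomial Finset

lemma my_charmatrix_eq {m : ℕ} (M : Matrix (Fin m) (Fin m) ℝ) :
    charmatrix M = (X : ℝ[X]) • (1 : Matrix (Fin m) (Fin m) ℝ[X]) - M.map (C : ℝ → ℝ[X]) := by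
  ext i j
  rw [charmatrix_apply]
  by_cases h : i = j <;>
    simp [h, Matrix.diagonal_apply, Matrix.one_apply, Matrix.smul_apply, Matrix.map_apply]

lemma my_charpoly_conj {m : ℕ} (U V M : Matrix (Fin m) (Fin m) ℝ)
    (h1 : U * V = 1) : (U * M * V).charpoly = M.charpoly := by
  have hmap : ∀ (A B : Matrix (Fin m) (Fin m) ℝ),
      (A * B).map (C : ℝ → ℝ[X]) = A.map C * B.map C := fun A B =>
    Matrix.map_mul (f := (C : ℝ →+* ℝ[X]))
  have hone : (1 : Matrix (Fin m) (Fin m) ℝ).map (C : ℝ → ℝ[X]) = 1 :=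
    Matrix.map_one _ (map_zero C) (map_one C)
  have key : charmatrix (U * M * V) = U.map C * charmatrix M * V.map C := by
    rw [my_charmatrix_eq, my_charmatrix_eq]
    rw [Matrix.mul_sub, Matrix.sub_mul]
    congr 1
    · rw [mul_smul_comm, mul_one, smul_mul_assoc, ← hmap, h1, hone]
    · rw [← hmap, ← hmap]
  unfold Matrix.charpoly
  rw [key, Matrix.det_mul, Matrix.det_mul]
  have : (U.map C).det * (V.map C).det = 1 := by
    rw [← Matrix.det_mul, ← hmap, h1, hone, Matrix.det_one]
  calc (U.map C).det * (charmatrix M).det * (V.map C).det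
      = (U.map C).det * (V.map C).det * (charmatrix M).det := by ring
    _ = (charmatrix M).det := by rw [this, one_mul]

lemma my_charpoly_diagonal {m : ℕ} (v : Fin m → ℝ) :
    (Matrix.diagonal v).charpoly = ∏ k, (X - C (v k)) := by
  have : charmatrix (Matrix.diagonal v) = Matrix.diagonal (fun k => (X : ℝ[X]) - C (v k)) := by
    apply Matrix.ext; intro i j
    by_cases h : i = j
    · subst h; simp [charmatrix_apply_eq]
    · simp [charmatrix_apply_ne _ _ _ h, Matrix.diagonal_apply_ne _ h]
  unfold Matrix.charpoly
  rw [this, Matrix.det_diagonal]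

lemma sm_gap_aux {k N : ℕ} (f : Fin k → Fin N) (hf : StrictMono f) (a : Fin k) :
    ∀ t (hb : (a : ℕ) + t < k), (f a : ℕ) + t ≤ f ⟨(a : ℕ) + t, hb⟩ := by
  intro t
  induction t with
  | zero =>
      intro hb
      have : a = ⟨(a : ℕ) + 0, hb⟩ := Fin.ext (by simp)
      rw [← this]; omega
  | succ t ih =>
      intro hb
      have hb' : (a : ℕ) + t < k := by omega
      have h1 := ih hb'
      have h2' : (f ⟨(a : ℕ) + t, hb'⟩ : ℕ) < f ⟨(a : ℕ) + (t + 1), hb⟩ :=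
        hf (by rw [Fin.lt_def]; simp)
      omega

lemma sm_gap {k N : ℕ} (f : Fin k → Fin N) (hf : StrictMono f) (a b : Fin k)
    (hab : (a : ℕ) ≤ b) : (f a : ℕ) + ((b : ℕ) - (a : ℕ)) ≤ f b := by
  have hb : (a : ℕ) + ((b : ℕ) - (a : ℕ)) < k := by omega
  have h := sm_gap_aux f hf a ((b : ℕ) - (a : ℕ)) hb
  have hbb : b = ⟨(a : ℕ) + ((b : ℕ) - (a : ℕ)), hb⟩ := Fin.ext (by simp; omega)
  rw [← hbb] at h; exact h

section Split

variable {R : Type*} [CommRing R]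

lemma det_split₁₂ {m p : ℕ} (A : Matrix (Fin (m + p)) (Fin (m + p)) R)
    (hz : ∀ i j : Fin (m + p), (i : ℕ) < m → m ≤ (j : ℕ) → A i j = 0) :
    A.det = (A.submatrix (fun a : Fin m => Fin.castAdd p a)
        (fun a : Fin m => Fin.castAdd p a)).det *
      (A.submatrix (fun b : Fin p => Fin.natAdd m b) (fun b : Fin p => Fin.natAdd m b)).det := by
  have h0 : A.det = (A.submatrix finSumFinEquiv finSumFinEquiv).det :=
    (Matrix.det_submatrix_equiv_self finSumFinEquiv A).symm
  have h1 : A.submatrix (finSumFinEquiv (m := m) (n := p)) finSumFinEquiv =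
      Matrix.fromBlocks
        (A.submatrix (fun a : Fin m => Fin.castAdd p a) (fun a : Fin m => Fin.castAdd p a))
        0
        (A.submatrix (fun b : Fin p => Fin.natAdd m b) (fun a : Fin m => Fin.castAdd p a))
        (A.submatrix (fun b : Fin p => Fin.natAdd m b) (fun b : Fin p => Fin.natAdd m b)) := by
    apply Matrix.ext
    rintro (i | i) (j | j) <;>
      simp only [Matrix.submatrix_apply, finSumFinEquiv_apply_left, finSumFinEquiv_apply_right,
        Matrix.fromBlocks_apply₁₁, Matrix.fromBlocks_apply₁₂, Matrix.fromBlocks_apply₂₁,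
        Matrix.fromBlocks_apply₂₂, Matrix.zero_apply]
    exact hz _ _ (by simp) (by simp)
  rw [h0, h1, Matrix.det_fromBlocks_zero₁₂]

lemma det_split₂₁ {m p : ℕ} (A : Matrix (Fin (m + p)) (Fin (m + p)) R)
    (hz : ∀ i j : Fin (m + p), m ≤ (i : ℕ) → (j : ℕ) < m → A i j = 0) :
    A.det = (A.submatrix (fun a : Fin m => Fin.castAdd p a)
        (fun a : Fin m => Fin.castAdd p a)).det *
      (A.submatrix (fun b : Fin p => Fin.natAdd m b) (fun b : Fin p => Fin.natAdd m b)).det := by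
  have h0 : A.det = (A.submatrix finSumFinEquiv finSumFinEquiv).det :=
    (Matrix.det_submatrix_equiv_self finSumFinEquiv A).symm
  have h1 : A.submatrix (finSumFinEquiv (m := m) (n := p)) finSumFinEquiv =
      Matrix.fromBlocks
        (A.submatrix (fun a : Fin m => Fin.castAdd p a) (fun a : Fin m => Fin.castAdd p a))
        (A.submatrix (fun a : Fin m => Fin.castAdd p a) (fun b : Fin p => Fin.natAdd m b))
        0
        (A.submatrix (fun b : Fin p => Fin.natAdd m b) (fun b : Fin p => Fin.natAdd m b)) := by
    apply Matrix.ext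
    rintro (i | i) (j | j) <;>
      simp only [Matrix.submatrix_apply, finSumFinEquiv_apply_left, finSumFinEquiv_apply_right,
        Matrix.fromBlocks_apply₁₁, Matrix.fromBlocks_apply₁₂, Matrix.fromBlocks_apply₂₁,
        Matrix.fromBlocks_apply₂₂, Matrix.zero_apply]
    exact hz _ _ (by simp) (by simp)
  rw [h0, h1, Matrix.det_fromBlocks_zero₂₁]

end Split

lemma my_det_conj_submatrix {N m : ℕ} (d : Fin N → ℝ) (hd : ∀ i, d i ≠ 0)
    (M : Matrix (Fin N) (Fin N) ℝ) (f : Fin m → Fin N) :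
    (((Matrix.diagonal d) * M * (Matrix.diagonal fun i => (d i)⁻¹)).submatrix f f).det
      = (M.submatrix f f).det := by
  have hent : ∀ i j, ((Matrix.diagonal d) * M * (Matrix.diagonal fun i => (d i)⁻¹)) i j
      = d i * M i j * (d j)⁻¹ := by
    intro i j
    rw [Matrix.mul_diagonal, Matrix.diagonal_mul]
  have h1 : (((Matrix.diagonal d) * M * (Matrix.diagonal fun i => (d i)⁻¹)).submatrix f f)
      = Matrix.of (fun i j => d (f i) * (Matrix.of (fun i j : Fin m =>
          (M.submatrix f f) i j * (d (f j))⁻¹) i j)) := by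
    apply Matrix.ext; intro i j
    simp [hent, mul_assoc]
  rw [h1, Matrix.det_mul_column]
  have h2 : (Matrix.of (fun i j : Fin m => (M.submatrix f f) i j * (d (f j))⁻¹))
      = Matrix.of (fun i j : Fin m => (d (f j))⁻¹ * ((M.submatrix f f)) i j) := by
    apply Matrix.ext; intro i j; simp [mul_comm]
  rw [h2, Matrix.det_mul_row]
  have : (∏ i : Fin m, d (f i)) * ((∏ i : Fin m, (d (f i))⁻¹) * (M.submatrix f f).det)
      = ((∏ i : Fin m, d (f i)) * (∏ i : Fin m, (d (f i))⁻¹)) * (M.submatrix f f).det := by ring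
  rw [this, ← Finset.prod_mul_distrib]
  have : ∏ i : Fin m, d (f i) * (d (f i))⁻¹ = 1 := by
    apply Finset.prod_eq_one; intro i _; exact mul_inv_cancel₀ (hd (f i))
  rw [this, one_mul]

lemma my_posdef_of_eigenvalues_pos {N : ℕ} {A : Matrix (Fin N) (Fin N) ℝ}
    (hA : A.IsHermitian) (hev : ∀ k, 0 < hA.eigenvalues k) : A.PosDef := by
  refine Matrix.PosDef.of_dotProduct_mulVec_pos hA (fun x hx => ?_)
  set U : Matrix (Fin N) (Fin N) ℝ := (hA.eigenvectorUnitary : Matrix (Fin N) (Fin N) ℝ) with hU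
  have hUs : U * star U = 1 := (Matrix.mem_unitaryGroup_iff).mp hA.eigenvectorUnitary.2
  have hspec : A = U * Matrix.diagonal (RCLike.ofReal ∘ hA.eigenvalues) * star U := hA.spectral_theorem
  set y : Fin N → ℝ := (star U) *ᵥ x with hy
  have hyx : U *ᵥ y = x := by
    rw [hy, Matrix.mulVec_mulVec, hUs, Matrix.one_mulVec]
  have hy0 : y ≠ 0 := by
    intro h
    apply hx
    rw [← hyx, h, Matrix.mulVec_zero]
  have hAx : A *ᵥ x = U *ᵥ (Matrix.diagonal (RCLike.ofReal ∘ hA.eigenvalues) *ᵥ y) := by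
    rw [hy, Matrix.mulVec_mulVec, Matrix.mulVec_mulVec, ← hspec]
  have hstar : (star x : Fin N → ℝ) = x := by funext i; simp
  have hUt : Uᵀ = star U := by
    rw [Matrix.star_eq_conjTranspose]
    apply Matrix.ext; intro i j; simp [Matrix.conjTranspose_apply]
  have h7 : x ᵥ* U = y := by
    rw [show U = (Uᵀ)ᵀ from (Matrix.transpose_transpose U).symm, Matrix.vecMul_transpose,
      hUt, hy]
  have hquad : star x ⬝ᵥ (A *ᵥ x) = ∑ k, hA.eigenvalues k * (y k * y k) := by
    rw [hAx, hstar, Matrix.dotProduct_mulVec, h7]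
    simp only [dotProduct, Matrix.mulVec_diagonal, Function.comp]
    apply Finset.sum_congr rfl
    intro k _
    simp only [RCLike.ofReal_real_eq_id, id]
    ring
  rw [hquad]
  obtain ⟨k0, hk0⟩ : ∃ k0, y k0 ≠ 0 := by
    by_contra h
    push_neg at h
    exact hy0 (funext h)
  apply Finset.sum_pos'
  · intro k _
    exact mul_nonneg (hev k).le (mul_self_nonneg _)
  · exact ⟨k0, Finset.mem_univ _, mul_pos (hev k0) (mul_self_pos.mpr hk0)⟩

lemma my_posdef_submatrix {N m : ℕ} {A : Matrix (Fin N) (Fin N) ℝ} (hA : A.PosDef)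
    (f : Fin m → Fin N) (hf : Function.Injective f) : (A.submatrix f f).PosDef := by
  classical
  have hsymm : ∀ a b, A b a = A a b := by
    intro a b
    conv_lhs => rw [← hA.1]
    simp [Matrix.conjTranspose_apply]
  refine Matrix.PosDef.of_dotProduct_mulVec_pos ?_ ?_
  · apply Matrix.ext; intro i j
    simp [Matrix.conjTranspose_apply, hsymm]
  · intro x hx
    set y : Fin N → ℝ := fun j => if h : ∃ i, f i = j then x h.choose else 0 with hy
    have hyf : ∀ i, y (f i) = x i := by
      intro i
      have h : ∃ i', f i' = f i := ⟨i, rfl⟩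
      show (if h : ∃ i', f i' = f i then x h.choose else 0) = x i
      rw [dif_pos h]
      exact congrArg x (hf h.choose_spec)
    have hyz : ∀ j, (¬ ∃ i, f i = j) → y j = 0 := by
      intro j h
      show (if h : ∃ i, f i = j then x h.choose else 0) = 0
      rw [dif_neg h]
    have hy0 : y ≠ 0 := by
      intro h
      apply hx
      funext i
      have := congrFun h (f i)
      rwa [hyf i] at this
    have sum_aux : ∀ g : Fin N → ℝ, ∑ j, y j * g j = ∑ i, x i * g (f i) := by
      intro g
      rw [← Finset.sum_subset (Finset.subset_univ (Finset.univ.image f))]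
      · rw [Finset.sum_image (fun a _ b _ h => hf h)]
        apply Finset.sum_congr rfl
        intro i _
        rw [hyf]
      · intro j _ hj
        have : ¬ ∃ i, f i = j := by
          intro ⟨i, hi⟩
          exact hj (Finset.mem_image.mpr ⟨i, Finset.mem_univ _, hi⟩)
        rw [hyz j this, zero_mul]
    have hq := hA.dotProduct_mulVec_pos hy0
    have hsy : (star y : Fin N → ℝ) = y := by funext j; simp
    have hsx : (star x : Fin m → ℝ) = x := by funext j; simp
    have hkey : star y ⬝ᵥ (A *ᵥ y) = star x ⬝ᵥ ((A.submatrix f f) *ᵥ x) := by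
      rw [hsy, hsx]
      simp only [dotProduct, Matrix.mulVec, Matrix.submatrix_apply]
      rw [sum_aux]
      apply Finset.sum_congr rfl
      intro i _
      congr 1
      have : ∀ j', A (f i) j' * y j' = y j' * A (f i) j' := fun j' => mul_comm _ _
      simp_rw [this]
      rw [sum_aux (fun j' => A (f i) j')]
      apply Finset.sum_congr rfl
      intro i' _
      exact mul_comm _ _
    rwa [hkey] at hq

lemma kernel_rec {m : ℕ} (A : Matrix (Fin (m+1)) (Fin (m+1)) ℝ)
    (htri : ∀ i j : Fin (m+1), ((i:ℕ)+1 < j ∨ (j:ℕ)+1 < i) → A i j = 0)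
    (hsup : ∀ i j : Fin (m+1), (j:ℕ) = (i:ℕ)+1 → A i j ≠ 0)
    (v : Fin (m+1) → ℝ) (μ : ℝ) (hv : A *ᵥ v = μ • v) (h0 : v 0 = 0) : v = 0 := by
  have key : ∀ t (h : t < m+1), v ⟨t, h⟩ = 0 := by
    intro t
    induction t using Nat.strong_induction_on with
    | _ t ih =>
      intro h
      match t, h with
      | 0, h =>
        have : (⟨0, h⟩ : Fin (m+1)) = 0 := Fin.ext (by simp)
        rw [this]; exact h0
      | t+1, h =>
        have ht : t < m + 1 := by omega
        have hrow := congrFun hv ⟨t, ht⟩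
        have hvt : v ⟨t, ht⟩ = 0 := ih t (by omega) ht
        rw [Pi.smul_apply, hvt, smul_zero] at hrow
        rw [Matrix.mulVec, dotProduct] at hrow
        rw [Finset.sum_eq_single (⟨t+1, h⟩ : Fin (m+1))] at hrow
        · rcases mul_eq_zero.mp hrow with h' | h'
          · exact absurd h' (hsup _ _ (by simp))
          · exact h'
        · intro j _ hj
          rcases lt_or_ge (j : ℕ) (t+1) with hlt | hge
          · have : v j = 0 := by
              have := ih (j : ℕ) (by omega) (j.isLt)
              simpa using this
            rw [this, mul_zero]
          · have hne : (j : ℕ) ≠ t + 1 := fun hh => hj (Fin.ext (by simp [hh]))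
            have : A ⟨t, ht⟩ j = 0 := htri _ _ (Or.inl (by simp; omega))
            rw [this, zero_mul]
        · intro hmem; exact absurd (Finset.mem_univ _) hmem
  funext j
  have := key (j : ℕ) j.isLt
  simpa using this

lemma sign_prod_erase {N : ℕ} (lam : Fin N → ℝ) (hmono : StrictMono lam) (i : Fin N) :
    0 < (-1 : ℝ) ^ (i : ℕ) * ∏ l ∈ Finset.univ.erase i, (lam l - lam i) := by
  have hsplit : Finset.univ.erase i = Finset.Iio i ∪ Finset.Ioi i := by
    ext l
    simp only [Finset.mem_erase, Finset.mem_univ, and_true, Finset.mem_union, Finset.mem_Iio,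
      Finset.mem_Ioi]
    exact ⟨fun h => h.lt_or_gt, fun h => by rcases h with h | h; exacts [ne_of_lt h, ne_of_gt h]⟩
  have hdisj : Disjoint (Finset.Iio i) (Finset.Ioi i) := by
    rw [Finset.disjoint_left]
    intro a ha hb
    simp only [Finset.mem_Iio] at ha
    simp only [Finset.mem_Ioi] at hb
    exact absurd (ha.trans hb) (lt_irrefl a)
  rw [hsplit, Finset.prod_union hdisj]
  have h1 : ∏ l ∈ Finset.Iio i, (lam l - lam i)
      = (-1:ℝ)^(i:ℕ) * ∏ l ∈ Finset.Iio i, (lam i - lam l) := by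
    have hcong : ∀ l ∈ Finset.Iio i, lam l - lam i = (-1) * (lam i - lam l) := by
      intro l _; ring
    rw [Finset.prod_congr rfl hcong, Finset.prod_mul_distrib, Finset.prod_const, Fin.card_Iio]
  have h2 : 0 < ∏ l ∈ Finset.Iio i, (lam i - lam l) :=
    Finset.prod_pos (fun l hl => sub_pos.mpr (hmono (Finset.mem_Iio.mp hl)))
  have h3 : 0 < ∏ l ∈ Finset.Ioi i, (lam l - lam i) :=
    Finset.prod_pos (fun l hl => sub_pos.mpr (hmono (Finset.mem_Ioi.mp hl)))
  have h4 : (-1:ℝ)^(i:ℕ) * (-1:ℝ)^(i:ℕ) = 1 := by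
    rw [← pow_add]; exact Even.neg_one_pow ⟨(i:ℕ), rfl⟩
  calc 0 < (∏ l ∈ Finset.Iio i, (lam i - lam l)) * ∏ l ∈ Finset.Ioi i, (lam l - lam i) :=
        mul_pos h2 h3
    _ = (-1:ℝ)^(i:ℕ) * (((-1:ℝ)^(i:ℕ) * ∏ l ∈ Finset.Iio i, (lam i - lam l))
          * ∏ l ∈ Finset.Ioi i, (lam l - lam i)) := by
        rw [← mul_assoc, ← mul_assoc, h4, one_mul]
    _ = (-1:ℝ)^(i:ℕ) * ((∏ l ∈ Finset.Iio i, (lam l - lam i))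
          * ∏ l ∈ Finset.Ioi i, (lam l - lam i)) := by rw [h1]

lemma tnn_of_tridiagonal {N : ℕ} (L : Matrix (Fin N) (Fin N) ℝ)
    (hTri : ∀ i j : Fin N, ((i:ℕ)+1 < j ∨ (j:ℕ)+1 < i) → L i j = 0)
    (hnn : ∀ i j, 0 ≤ L i j)
    (hprin : ∀ (m : ℕ) (f : Fin m → Fin N), Function.Injective f →
      0 ≤ (L.submatrix f f).det) :
    ∀ (k : ℕ) (r c : Fin k → Fin N), StrictMono r → StrictMono c →
      0 ≤ (L.submatrix r c).det := by
  intro k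
  induction k using Nat.strong_induction_on with
  | _ k ih =>
    match k, ih with
    | 0, ih =>
      intro r c hr hc
      simp [Matrix.det_fin_zero]
    | (k+1), ih =>
      intro r c hr hc
      have hsucc : StrictMono (Fin.succ : Fin k → Fin (k+1)) := by
        intro a b hab
        rw [Fin.lt_def] at *
        simpa using hab
      rcases lt_trichotomy ((r 0 : ℕ)) ((c 0 : ℕ)) with hlt | heq | hgt
      · -- row expansion along row 0
        rw [Matrix.det_succ_row_zero]
        rw [Fintype.sum_eq_single (0 : Fin (k+1)) ?_]
        · simp only [Fin.val_zero, pow_zero, one_mul, Fin.succAbove_zero,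
            Matrix.submatrix_apply, Matrix.submatrix_submatrix]
          exact mul_nonneg (hnn _ _)
            (ih k (by omega) _ _ (hr.comp hsucc) (hc.comp hsucc))
        · intro j hj
          have hj1 : 1 ≤ (j : ℕ) := by
            rcases Nat.eq_zero_or_pos (j : ℕ) with h | h
            · exact absurd (Fin.ext h : j = 0) hj
            · omega
          have hgap : (c 0 : ℕ) + (j : ℕ) ≤ c j := by
            have := sm_gap c hc 0 j (by simp)
            simpa using this
          have hz : (L.submatrix r c) 0 j = 0 := by
            apply hTri
            left
            omega
          rw [hz, mul_zero, zero_mul]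
      · -- r 0 = c 0
        by_cases hall : ∀ j : Fin (k+1), (r j : ℕ) = (r 0 : ℕ) + j ∧ (c j : ℕ) = (c 0 : ℕ) + j
        · have hrc : r = c := by
            funext j
            exact Fin.ext (by rw [(hall j).1, (hall j).2, heq])
          rw [hrc]
          exact hprin _ c hc.injective
        · classical
          have hP : ∃ t, ∃ h : t < k+1,
              ¬((r ⟨t,h⟩ : ℕ) = (r 0 : ℕ) + t ∧ (c ⟨t,h⟩ : ℕ) = (c 0 : ℕ) + t) := by
            obtain ⟨j0, hj0⟩ := not_forall.mp hall
            exact ⟨(j0 : ℕ), j0.isLt, by simpa using hj0⟩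
          set m := Nat.find hP with hmdef
          obtain ⟨hmk, hmne⟩ := Nat.find_spec hP
          have hmin : ∀ t (h : t < k+1), t < m →
              (r ⟨t,h⟩ : ℕ) = (r 0 : ℕ) + t ∧ (c ⟨t,h⟩ : ℕ) = (c 0 : ℕ) + t := by
            intro t h htm
            by_contra hcon
            exact (Nat.find_min hP htm) ⟨h, hcon⟩
          have hm0 : 0 < m := by
            rcases Nat.eq_zero_or_pos m with h | h
            · exfalso
              have hfind0 : Nat.find hP = 0 := by rw [← hmdef]; exact h
              have he : (⟨Nat.find hP, hmk⟩ : Fin (k+1)) = 0 := by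
                apply Fin.ext
                simp only [Fin.val_mk, Fin.val_zero]
                exact hfind0
              apply hmne
              rw [he, hfind0]
              exact ⟨by simp, by simp⟩
            · exact h
          have hmk' : m < k + 1 := by rw [hmdef]; exact hmk
          set p := k + 1 - m with hpdef
          have hkmp : k + 1 = m + p := by omega
          have hect : StrictMono (finCongr hkmp.symm : Fin (m+p) ≃ Fin (k+1)) := by
            intro a b hab
            rw [Fin.lt_def] at *
            simpa using hab
          set r' : Fin (m+p) → Fin N := r ∘ (finCongr hkmp.symm) with hr'def
          set c' : Fin (m+p) → Fin N := c ∘ (finCongr hkmp.symm) with hc'def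
          have hdet : (L.submatrix r c).det = (L.submatrix r' c').det := by
            rw [hr'def, hc'def, ← Matrix.submatrix_submatrix,
              Matrix.det_submatrix_equiv_self]
          rw [hdet]
          have hr' : StrictMono r' := hr.comp hect
          have hc' : StrictMono c' := hc.comp hect
          have hr'v : ∀ (x : Fin (m+p)) (hx : (x:ℕ) < k+1), r' x = r ⟨(x:ℕ), hx⟩ :=
            fun x hx => congrArg r (Fin.ext (by simp))
          have hc'v : ∀ (x : Fin (m+p)) (hx : (x:ℕ) < k+1), c' x = c ⟨(x:ℕ), hx⟩ :=
            fun x hx => congrArg c (Fin.ext (by simp))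
          -- value facts
          have hrrun : ∀ (x : Fin (m+p)), (x:ℕ) < m → (r' x : ℕ) = (r 0 : ℕ) + x := by
            intro x hx
            rw [hr'v x (by omega)]
            exact (hmin x (by omega) hx).1
          have hcrun : ∀ (x : Fin (m+p)), (x:ℕ) < m → (c' x : ℕ) = (c 0 : ℕ) + x := by
            intro x hx
            rw [hc'v x (by omega)]
            exact (hmin x (by omega) hx).2
          have hrge : (r 0 : ℕ) + m ≤ (r ⟨m, hmk'⟩ : ℕ) := by
            have := sm_gap r hr 0 ⟨m, hmk'⟩ (by simp)
            simpa using this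
          have hcge : (c 0 : ℕ) + m ≤ (c ⟨m, hmk'⟩ : ℕ) := by
            have := sm_gap c hc 0 ⟨m, hmk'⟩ (by simp)
            simpa using this
          have hmne' : ¬((r ⟨m, hmk'⟩ : ℕ) = (r 0 : ℕ) + m ∧ (c ⟨m, hmk'⟩ : ℕ) = (c 0 : ℕ) + m) := by
            intro hcon
            apply hmne
            constructor
            · have : (⟨Nat.find hP, hmk⟩ : Fin (k+1)) = ⟨m, hmk'⟩ :=
                Fin.ext (by simp only [Fin.val_mk]; exact hmdef.symm)
              rw [this, ← hmdef]
              exact hcon.1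
            · have : (⟨Nat.find hP, hmk⟩ : Fin (k+1)) = ⟨m, hmk'⟩ :=
                Fin.ext (by simp only [Fin.val_mk]; exact hmdef.symm)
              rw [this, ← hmdef]
              exact hcon.2
          -- bounds from position m onwards
          have hrtail : ∀ (x : Fin (m+p)), m ≤ (x:ℕ) → (r ⟨m,hmk'⟩ : ℕ) + ((x:ℕ) - m) ≤ (r' x : ℕ) := by
            intro x hx
            rw [hr'v x (by omega)]
            have := sm_gap r hr ⟨m, hmk'⟩ ⟨(x:ℕ), by omega⟩ (by simpa using hx)
            simpa using this
          have hctail : ∀ (x : Fin (m+p)), m ≤ (x:ℕ) → (c ⟨m,hmk'⟩ : ℕ) + ((x:ℕ) - m) ≤ (c' x : ℕ) := by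
            intro x hx
            rw [hc'v x (by omega)]
            have := sm_gap c hc ⟨m, hmk'⟩ ⟨(x:ℕ), by omega⟩ (by simpa using hx)
            simpa using this
          have hA1 : StrictMono (fun a : Fin m => Fin.castAdd p a) := Fin.strictMono_castAdd p
          have hA2 : StrictMono (fun b : Fin p => Fin.natAdd m b) := by
            intro a b hab
            rw [Fin.lt_def] at *
            simpa using hab
          have hF1 : r' ∘ (fun a : Fin m => Fin.castAdd p a) = c' ∘ (fun a : Fin m => Fin.castAdd p a) := by
            funext a
            apply Fin.ext
            have h1 := hrrun (Fin.castAdd p a) (by simp)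
            have h2 := hcrun (Fin.castAdd p a) (by simp)
            simp only [Function.comp_apply]
            omega
          have hF1nn : 0 ≤ ((L.submatrix r' c').submatrix (fun a : Fin m => Fin.castAdd p a)
              (fun a : Fin m => Fin.castAdd p a)).det := by
            rw [Matrix.submatrix_submatrix, hF1]
            exact hprin m _ (hc'.comp hA1).injective
          have hF2nn : 0 ≤ ((L.submatrix r' c').submatrix (fun b : Fin p => Fin.natAdd m b)
              (fun b : Fin p => Fin.natAdd m b)).det := by
            rw [Matrix.submatrix_submatrix]
            exact ih p (by omega) _ _ (hr'.comp hA2) (hc'.comp hA2)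
          rcases not_and_or.mp hmne' with hbr | hbc
          · -- row break: zeros for i ≥ m, j < m
            rw [det_split₂₁]
            · exact mul_nonneg hF1nn hF2nn
            · intro i j hi hj
              rw [Matrix.submatrix_apply]
              apply hTri
              right
              have h1 := hcrun j hj
              have h2 := hrtail i hi
              omega
          · -- column break
            rw [det_split₁₂]
            · exact mul_nonneg hF1nn hF2nn
            · intro i j hi hj
              rw [Matrix.submatrix_apply]
              apply hTri
              left
              have h1 := hrrun i hi
              have h2 := hctail j hj
              omega
      · -- column expansion
        rw [Matrix.det_succ_column_zero]
        rw [Fintype.sum_eq_single (0 : Fin (k+1)) ?_]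
        · simp only [Fin.val_zero, pow_zero, one_mul, Fin.succAbove_zero,
            Matrix.submatrix_apply, Matrix.submatrix_submatrix]
          exact mul_nonneg (hnn _ _)
            (ih k (by omega) _ _ (hr.comp hsucc) (hc.comp hsucc))
        · intro i hi
          have hi1 : 1 ≤ (i : ℕ) := by
            rcases Nat.eq_zero_or_pos (i : ℕ) with h | h
            · exact absurd (Fin.ext h : i = 0) hi
            · omega
          have hgap : (r 0 : ℕ) + (i : ℕ) ≤ r i := by
            have := sm_gap r hr 0 i (by simp)
            simpa using this
          have hz : (L.submatrix r c) i 0 = 0 := by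
            apply hTri
            right
            omega
          rw [hz, mul_zero, zero_mul]

theorem stmt12 {n : ℕ} (L : Matrix (Fin (n + 2)) (Fin (n + 2)) ℝ)
    (hTri : Tridiagonal L)
    (hoff : ∀ i : Fin (n + 1), 0 < L i.castSucc i.succ ∧ 0 < L i.succ i.castSucc)
    (lam : Fin (n + 2) → ℝ)
    (hchar : L.charpoly = ∏ i, (Polynomial.X - Polynomial.C (lam i)))
    (hmono : StrictMono lam) (hpos : 0 < lam 0) :
    TNN L ↔
      ∀ i : Fin (n + 2),
        0 < (-1 : ℝ) ^ (i : ℕ) *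
          ((L - lam i • (1 : Matrix (Fin (n + 2)) (Fin (n + 2)) ℝ)).submatrix
            Fin.succ Fin.succ).det := by
  classical
  -- the symmetrizing diagonal weights
  set drec : ℕ → ℝ := fun t => Nat.rec (1 : ℝ) (fun t dt =>
      if h : t < n + 1 then
        dt * Real.sqrt (L (Fin.castSucc ⟨t, h⟩) (Fin.succ ⟨t, h⟩) /
          L (Fin.succ ⟨t, h⟩) (Fin.castSucc ⟨t, h⟩))
      else dt) t with hdrec
  have hdrec_succ : ∀ (t : ℕ) (h : t < n + 1), drec (t + 1) =
      drec t * Real.sqrt (L (Fin.castSucc ⟨t, h⟩) (Fin.succ ⟨t, h⟩) /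
        L (Fin.succ ⟨t, h⟩) (Fin.castSucc ⟨t, h⟩)) := by
    intro t h
    simp only [hdrec, dif_pos h]
  have hdrec_pos : ∀ t : ℕ, 0 < drec t := by
    intro t
    induction t with
    | zero => simp [hdrec]
    | succ t iht =>
        by_cases h : t < n + 1
        · rw [hdrec_succ t h]
          have hb := (hoff ⟨t, h⟩).1
          have hc := (hoff ⟨t, h⟩).2
          exact mul_pos iht (Real.sqrt_pos.mpr (div_pos hb hc))
        · show (0:ℝ) < (if h : t < n + 1 then _ else drec t)
          rw [dif_neg h]
          exact iht
  set d : Fin (n + 2) → ℝ := fun i => drec (i : ℕ) with hd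
  have hdpos : ∀ i, 0 < d i := fun i => hdrec_pos _
  have hdne : ∀ i, d i ≠ 0 := fun i => (hdpos i).ne'
  set Dm : Matrix (Fin (n+2)) (Fin (n+2)) ℝ := Matrix.diagonal d with hDm
  set Vm : Matrix (Fin (n+2)) (Fin (n+2)) ℝ := Matrix.diagonal (fun i => (d i)⁻¹) with hVm
  have hDV : Dm * Vm = 1 := by
    rw [hDm, hVm, Matrix.diagonal_mul_diagonal]
    have : (fun i => d i * (d i)⁻¹) = fun _ : Fin (n+2) => (1:ℝ) := by
      funext i; exact mul_inv_cancel₀ (hdne i)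
    rw [this, Matrix.diagonal_one]
  have hVD : Vm * Dm = 1 := by
    rw [hDm, hVm, Matrix.diagonal_mul_diagonal]
    have : (fun i => (d i)⁻¹ * d i) = fun _ : Fin (n+2) => (1:ℝ) := by
      funext i; exact inv_mul_cancel₀ (hdne i)
    rw [this, Matrix.diagonal_one]
  set J : Matrix (Fin (n+2)) (Fin (n+2)) ℝ := Dm * L * Vm with hJdef
  have hJent : ∀ i j, J i j = d i * L i j * (d j)⁻¹ := by
    intro i j
    rw [hJdef, hDm, hVm, Matrix.mul_diagonal, Matrix.diagonal_mul]
  have hJtri : ∀ i j : Fin (n+2), ((i:ℕ)+1 < j ∨ (j:ℕ)+1 < i) → J i j = 0 := by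
    intro i j h
    rw [hJent, hTri i j h, mul_zero, zero_mul]
  -- the key symmetry computation
  have hkey : ∀ i : Fin (n+1), J i.castSucc i.succ = J i.succ i.castSucc := by
    intro i
    have hb := (hoff i).1
    have hc := (hoff i).2
    set b := L i.castSucc i.succ
    set c := L i.succ i.castSucc
    set s := Real.sqrt (b / c) with hs
    have hspos : 0 < s := Real.sqrt_pos.mpr (div_pos hb hc)
    have hss : s * s = b / c := Real.mul_self_sqrt (div_pos hb hc).le
    have hdc : d i.castSucc = drec (i : ℕ) := by
      simp [hd, Fin.coe_castSucc]
    have hds : d i.succ = drec (i : ℕ) * s := by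
      have : (i.succ : ℕ) = (i : ℕ) + 1 := Fin.val_succ i
      rw [hd]
      show drec (i.succ : ℕ) = drec (i:ℕ) * s
      rw [this, hdrec_succ (i:ℕ) i.isLt]
    rw [hJent, hJent, hdc, hds]
    have hdr := hdrec_pos (i : ℕ)
    have h1 : drec (i:ℕ) * b * (drec (i:ℕ) * s)⁻¹ = b * s⁻¹ := by
      field_simp
    have h2 : drec (i:ℕ) * s * c * (drec (i:ℕ))⁻¹ = s * c := by
      field_simp
    rw [h1, h2]
    rw [eq_comm, mul_comm s c, ← div_eq_mul_inv, eq_div_iff hspos.ne']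
    calc c * s * s = c * (s * s) := by ring
      _ = c * (b / c) := by rw [hss]
      _ = b := by field_simp
  -- index helpers
  have hidx : ∀ (i j : Fin (n+2)), (j:ℕ) = (i:ℕ) + 1 →
      ∃ i' : Fin (n+1), i'.castSucc = i ∧ i'.succ = j := by
    intro i j hij
    refine ⟨⟨(i:ℕ), by omega⟩, Fin.ext rfl, Fin.ext (by simp [hij])⟩
  have hJoff : ∀ i : Fin (n+1), 0 < J i.castSucc i.succ ∧ 0 < J i.succ i.castSucc := by
    intro i
    constructor
    · rw [hJent]
      have := (hoff i).1
      have h1 := hdpos i.castSucc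
      have h2 := hdpos i.succ
      positivity
    · rw [hJent]
      have := (hoff i).2
      have h1 := hdpos i.castSucc
      have h2 := hdpos i.succ
      positivity
  have hJsup : ∀ i j : Fin (n+2), (j:ℕ) = (i:ℕ)+1 → J i j ≠ 0 := by
    intro i j hij
    obtain ⟨i', h1, h2⟩ := hidx i j hij
    rw [← h1, ← h2]
    exact (hJoff i').1.ne'
  have hJ : J.IsHermitian := by
    apply Matrix.ext
    intro i j
    rw [Matrix.conjTranspose_apply]
    rw [show star (J j i) = J j i from star_trivial _]
    rcases lt_trichotomy ((i:ℕ)) ((j:ℕ)) with h | h | h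
    · rcases Nat.lt_or_ge (j:ℕ) ((i:ℕ)+2) with h2 | h2
      · obtain ⟨i', hi1, hi2⟩ := hidx i j (by omega)
        rw [← hi1, ← hi2]
        exact (hkey i').symm
      · rw [hJtri i j (by omega), hJtri j i (by omega)]
    · rw [Fin.ext h]
    · rcases Nat.lt_or_ge (i:ℕ) ((j:ℕ)+2) with h2 | h2
      · obtain ⟨j', hj1, hj2⟩ := hidx j i (by omega)
        rw [← hj1, ← hj2]
        exact hkey j'
      · rw [hJtri i j (by omega), hJtri j i (by omega)]
  set ev : Fin (n+2) → ℝ := hJ.eigenvalues with hev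
  set U : Matrix (Fin (n+2)) (Fin (n+2)) ℝ := (hJ.eigenvectorUnitary :
      Matrix (Fin (n+2)) (Fin (n+2)) ℝ) with hUdef
  have hUsU : U * star U = 1 := (Matrix.mem_unitaryGroup_iff).mp hJ.eigenvectorUnitary.2
  have hsUU : star U * U = 1 := (Matrix.mem_unitaryGroup_iff').mp hJ.eigenvectorUnitary.2
  have hspec0 := hJ.spectral_theorem
  have hofid : Matrix.diagonal (RCLike.ofReal ∘ hJ.eigenvalues) = Matrix.diagonal ev := by
    congr 1
  have hspec : J = U * Matrix.diagonal ev * star U := by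
    rw [← hofid]
    exact hspec0
  -- the fundamental polynomial identity
  have hpoly : (∏ k, ((X : ℝ[X]) - C (ev k))) = ∏ l, ((X : ℝ[X]) - C (lam l)) := by
    calc (∏ k, ((X : ℝ[X]) - C (ev k))) = (Matrix.diagonal ev).charpoly :=
          (my_charpoly_diagonal ev).symm
      _ = (U * Matrix.diagonal ev * star U).charpoly :=
          (my_charpoly_conj U (star U) (Matrix.diagonal ev) hUsU).symm
      _ = J.charpoly := by rw [← hspec]
      _ = (Dm * L * Vm).charpoly := by rw [hJdef]
      _ = L.charpoly := my_charpoly_conj Dm Vm L hDV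
      _ = ∏ l, ((X : ℝ[X]) - C (lam l)) := hchar
  have heval : ∀ t : ℝ, (∏ k, (t - ev k)) = ∏ l, (t - lam l) := by
    intro t
    have := congrArg (Polynomial.eval t) hpoly
    simpa [Polynomial.eval_prod] using this
  -- positivity of the eigenvalues of J
  have hevpos : ∀ k, 0 < ev k := by
    intro k
    have h0 : (∏ l, (ev k - lam l)) = 0 := by
      rw [← heval]
      exact Finset.prod_eq_zero (Finset.mem_univ k) (by ring)
    obtain ⟨l, _, hl⟩ := Finset.prod_eq_zero_iff.mp h0
    have : ev k = lam l := by linarith [sub_eq_zero.mp hl]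
    rw [this]
    calc (0:ℝ) < lam 0 := hpos
      _ ≤ lam l := hmono.monotone (Fin.zero_le l)
  have hposJ : J.PosDef := my_posdef_of_eigenvalues_pos hJ hevpos
  -- principal minors of L are nonnegative (in fact positive)
  have hprin : ∀ (m : ℕ) (f : Fin m → Fin (n+2)), Function.Injective f →
      0 ≤ (L.submatrix f f).det := by
    intro m f hf
    have h1 : ((Dm * L * Vm).submatrix f f).det = (L.submatrix f f).det := by
      rw [hDm, hVm]
      exact my_det_conj_submatrix d hdne L f
    rw [← h1, ← hJdef]
    exact (my_posdef_submatrix hposJ f hf).det_pos.le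
  -- entries of L are nonnegative
  have hnnL : ∀ i j, 0 ≤ L i j := by
    intro i j
    rcases lt_trichotomy ((i:ℕ)) ((j:ℕ)) with h | h | h
    · rcases Nat.lt_or_ge (j:ℕ) ((i:ℕ)+2) with h2 | h2
      · obtain ⟨i', hi1, hi2⟩ := hidx i j (by omega)
        rw [← hi1, ← hi2]
        exact (hoff i').1.le
      · rw [hTri i j (by omega)]
    · have hij : i = j := Fin.ext h
      subst hij
      have hLJ : L i i = J i i := by
        rw [hJent, mul_comm (d i) (L i i), mul_assoc, mul_inv_cancel₀ (hdne i), mul_one]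
      rw [hLJ]
      have := hposJ.dotProduct_mulVec_pos (x := Pi.single i 1) (by
        intro hcon
        have := congrFun hcon i
        simp [Pi.single_apply] at this)
      have hquad : star (Pi.single i (1:ℝ)) ⬝ᵥ (J *ᵥ Pi.single i 1) = J i i := by
        simp [Matrix.mulVec_single, dotProduct, Pi.single_apply]
      rw [hquad] at this
      exact this.le
    · rcases Nat.lt_or_ge (i:ℕ) ((j:ℕ)+2) with h2 | h2
      · obtain ⟨j', hj1, hj2⟩ := hidx j i (by omega)
        rw [← hj1, ← hj2]
        exact (hoff j').2.le
      · rw [hTri i j (by omega)]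
  have hTNN : TNN L := by
    intro k r c hr hc
    exact tnn_of_tridiagonal L hTri hnnL hprin k r c hr hc
  -- the sign condition side
  have hRHS : ∀ i : Fin (n + 2),
      0 < (-1 : ℝ) ^ (i : ℕ) *
        ((L - lam i • (1 : Matrix (Fin (n + 2)) (Fin (n + 2)) ℝ)).submatrix
          Fin.succ Fin.succ).det := by
    intro i
    obtain ⟨k0, _, hk0'⟩ : ∃ k0 ∈ Finset.univ, lam i - ev k0 = 0 := by
      apply Finset.prod_eq_zero_iff.mp
      rw [heval (lam i)]
      exact Finset.prod_eq_zero (Finset.mem_univ i) (by ring)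
    have hk0 : ev k0 = lam i := by linarith [sub_eq_zero.mp hk0']
    set P : ℝ[X] := ∏ k ∈ Finset.univ.erase k0, ((X:ℝ[X]) - C (ev k)) with hP
    set Q : ℝ[X] := ∏ l ∈ Finset.univ.erase i, ((X:ℝ[X]) - C (lam l)) with hQ
    have hPQ : P = Q := by
      have h1 : ((X:ℝ[X]) - C (lam i)) * P = ((X:ℝ[X]) - C (lam i)) * Q := by
        rw [hP, hQ]
        calc ((X:ℝ[X]) - C (lam i)) * ∏ k ∈ Finset.univ.erase k0, ((X:ℝ[X]) - C (ev k))
            = ((X:ℝ[X]) - C (ev k0)) * ∏ k ∈ Finset.univ.erase k0, ((X:ℝ[X]) - C (ev k)) := by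
              rw [hk0]
          _ = ∏ k, ((X:ℝ[X]) - C (ev k)) :=
              Finset.mul_prod_erase Finset.univ (fun k => (X:ℝ[X]) - C (ev k))
                (Finset.mem_univ k0)
          _ = ∏ l, ((X:ℝ[X]) - C (lam l)) := hpoly
          _ = ((X:ℝ[X]) - C (lam i)) * ∏ l ∈ Finset.univ.erase i, ((X:ℝ[X]) - C (lam l)) :=
              (Finset.mul_prod_erase Finset.univ (fun l => (X:ℝ[X]) - C (lam l))
                (Finset.mem_univ i)).symm
      exact mul_left_cancel₀ (Polynomial.X_sub_C_ne_zero (lam i)) h1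
    set w : Fin (n+2) → ℝ := fun k => ∏ j ∈ Finset.univ.erase k, (ev j - lam i) with hww
    have hwk0 : w k0 = ∏ l ∈ Finset.univ.erase i, (lam l - lam i) := by
      have heq0 := congrArg (Polynomial.eval (lam i)) hPQ
      have h2 : ∏ x ∈ Finset.univ.erase k0, (lam i - ev x)
          = ∏ x ∈ Finset.univ.erase i, (lam i - lam x) := by
        simpa [hP, hQ, Polynomial.eval_prod] using heq0
      have hflip : ∀ (s : Finset (Fin (n+2))) (g : Fin (n+2) → ℝ),
          ∏ x ∈ s, (g x - lam i) = (-1:ℝ)^s.card * ∏ x ∈ s, (lam i - g x) := by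
        intro s g
        calc ∏ x ∈ s, (g x - lam i) = ∏ x ∈ s, (-1:ℝ) * (lam i - g x) :=
              Finset.prod_congr rfl (fun x _ => by ring)
          _ = _ := by rw [Finset.prod_mul_distrib, Finset.prod_const]
      have hcard : (Finset.univ.erase k0).card = (Finset.univ.erase i).card := by
        rw [Finset.card_erase_of_mem (Finset.mem_univ _),
          Finset.card_erase_of_mem (Finset.mem_univ _)]
      show (∏ j ∈ Finset.univ.erase k0, (ev j - lam i))
          = ∏ l ∈ Finset.univ.erase i, (lam l - lam i)
      rw [hflip (Finset.univ.erase k0) ev, hflip (Finset.univ.erase i) lam, h2, hcard]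
    have hwz : ∀ k, k ≠ k0 → w k = 0 := by
      intro k hkk
      apply Finset.prod_eq_zero (Finset.mem_erase.mpr ⟨Ne.symm hkk, Finset.mem_univ k0⟩)
      rw [hk0]; ring
    set A : Matrix (Fin (n+2)) (Fin (n+2)) ℝ := J - lam i • 1 with hA
    have hDg : Matrix.diagonal ev - lam i • (1 : Matrix (Fin (n+2)) (Fin (n+2)) ℝ)
        = Matrix.diagonal (fun k => ev k - lam i) := by
      apply Matrix.ext
      intro a b
      by_cases hab : a = b
      · subst hab; simp
      · simp [Matrix.diagonal_apply_ne _ hab, Matrix.one_apply_ne hab]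
    have hAspec : A = U * Matrix.diagonal (fun k => ev k - lam i) * star U := by
      rw [hA, hspec, ← hDg, Matrix.mul_sub, Matrix.sub_mul]
      congr 1
      rw [Matrix.mul_smul, Matrix.mul_one, Matrix.smul_mul, hUsU]
    have hadjU : adjugate U = U.det • star U := by
      calc adjugate U = 1 * adjugate U := (one_mul _).symm
        _ = (star U * U) * adjugate U := by rw [hsUU]
        _ = star U * (U * adjugate U) := by rw [mul_assoc]
        _ = star U * (U.det • 1) := by rw [Matrix.mul_adjugate]
        _ = U.det • star U := by rw [Matrix.mul_smul, mul_one]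
    have hdetsU : (star U).det = U.det := by
      rw [Matrix.star_eq_conjTranspose, Matrix.det_conjTranspose]
      exact star_trivial _
    have hadjsU : adjugate (star U) = U.det • U := by
      calc adjugate (star U) = adjugate (star U) * 1 := (mul_one _).symm
        _ = adjugate (star U) * (star U * U) := by rw [hsUU]
        _ = (adjugate (star U) * star U) * U := by rw [mul_assoc]
        _ = ((star U).det • 1) * U := by rw [Matrix.adjugate_mul]
        _ = U.det • U := by rw [hdetsU, Matrix.smul_mul, one_mul]
    have hdet1 : U.det * U.det = 1 := by
      have h := congrArg Matrix.det hUsU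
      rw [Matrix.det_mul, hdetsU, Matrix.det_one] at h
      exact h
    have hadjA : adjugate A = U * Matrix.diagonal w * star U := by
      rw [hAspec, Matrix.adjugate_mul_distrib, Matrix.adjugate_mul_distrib, hadjU, hadjsU,
        Matrix.adjugate_diagonal]
      rw [Matrix.mul_smul, Matrix.mul_smul, Matrix.smul_mul, smul_smul, hdet1, one_smul,
        ← Matrix.mul_assoc]
    have hdetA : (A.submatrix Fin.succ Fin.succ).det = adjugate A 0 0 := by
      rw [Matrix.adjugate_fin_succ_eq_det_submatrix]
      simp [Fin.succAbove_zero]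
    have hentry : adjugate A 0 0 = w k0 * (U 0 k0 * U 0 k0) := by
      rw [hadjA, Matrix.mul_apply]
      have hterm : ∀ k, (U * Matrix.diagonal w) 0 k * (star U) k 0 = w k * (U 0 k * U 0 k) := by
        intro k
        rw [Matrix.mul_diagonal, Matrix.star_eq_conjTranspose, Matrix.conjTranspose_apply,
          star_trivial]
        ring
      calc ∑ k, (U * Matrix.diagonal w) 0 k * (star U) k 0
          = ∑ k, w k * (U 0 k * U 0 k) := Finset.sum_congr rfl (fun k _ => hterm k)
        _ = w k0 * (U 0 k0 * U 0 k0) := Finset.sum_eq_single k0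
            (fun k _ hk => by rw [hwz k hk, zero_mul])
            (fun h => absurd (Finset.mem_univ _) h)
    set v : Fin (n+2) → ℝ := ⇑(hJ.eigenvectorBasis k0) with hv
    have hvU : U 0 k0 = v 0 := rfl
    have hmv : J *ᵥ v = lam i • v := by
      have h1 := hJ.mulVec_eigenvectorBasis k0
      rw [show hJ.eigenvalues k0 = lam i from hk0] at h1
      exact h1
    have hvne : v ≠ 0 := by
      intro h
      apply hJ.eigenvectorBasis.orthonormal.ne_zero k0
      ext x
      exact congrFun h x
    have hv0 : v 0 ≠ 0 := by
      intro h0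
      exact hvne (kernel_rec J hJtri hJsup v (lam i) hmv h0)
    have hsub : ((L - lam i • (1:Matrix (Fin (n+2)) (Fin (n+2)) ℝ)).submatrix
        Fin.succ Fin.succ).det = (A.submatrix Fin.succ Fin.succ).det := by
      have hconj : A = Dm * (L - lam i • 1) * Vm := by
        rw [hA, hJdef, Matrix.mul_sub, Matrix.sub_mul]
        congr 1
        rw [Matrix.mul_smul, Matrix.smul_mul, Matrix.mul_one, hDV]
      rw [hconj, hDm, hVm, my_det_conj_submatrix d hdne _ Fin.succ]
    rw [hsub, hdetA, hentry]
    have hsgn := sign_prod_erase lam hmono i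
    rw [← hwk0] at hsgn
    calc (0:ℝ) < ((-1)^(i:ℕ) * w k0) * (v 0 * v 0) :=
          mul_pos hsgn (mul_self_pos.mpr hv0)
      _ = (-1)^(i:ℕ) * (w k0 * (U 0 k0 * U 0 k0)) := by rw [hvU]; ring
  exact ⟨fun _ => hRHS, fun _ => hTNN⟩
end

section
/- Let L₀ be an N×N complex matrix such that for all t in an open interval containing 0, exp(tL₀) admits an LU-type decomposition exp(tL₀) = a(t)⁻¹ b(t) with b(t) upper triangular invertible and a(t) lower triangular unipotent. Then L(t) := a(t) L₀ a(t)⁻¹ satisfies the Toda lattice Lax equation dL/dt = [L, L₋], where L₋ denotes the strictly lower triangular part of L. -/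
open Matrix Set Filter Topology

set_option maxHeartbeats 1600000

namespace SymesAux


variable {m : Type*} [Fintype m] [DecidableEq m]

lemma differentiableAt_det {A : ℝ → Matrix m m ℂ} {t : ℝ}
    (hA : ∀ i j, DifferentiableAt ℝ (fun u => A u i j) t) :
    DifferentiableAt ℝ (fun u => (A u).det) t := by
  simp only [Matrix.det_apply']
  exact DifferentiableAt.fun_sum fun σ _ =>
    (DifferentiableAt.fun_finsetProd fun i _ => hA (σ i) i).const_mul _

lemma differentiableAt_adjugate {A : ℝ → Matrix m m ℂ} {t : ℝ}
    (hA : ∀ i j, DifferentiableAt ℝ (fun u => A u i j) t) (i j : m) :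
    DifferentiableAt ℝ (fun u => (A u).adjugate i j) t := by
  simp only [Matrix.adjugate_apply]
  refine differentiableAt_det fun p q => ?_
  by_cases h : p = j
  · simpa [Matrix.updateRow_apply, h] using differentiableAt_const (Pi.single i (1:ℂ) q)
  · simpa [Matrix.updateRow_apply, h] using hA p q

lemma differentiableAt_inv_entry {A : ℝ → Matrix m m ℂ} {t : ℝ}
    (hA : ∀ i j, DifferentiableAt ℝ (fun u => A u i j) t)
    (hdet : (A t).det ≠ 0) (i j : m) :
    DifferentiableAt ℝ (fun u => (A u)⁻¹ i j) t := by
  have h : ∀ u, (A u)⁻¹ i j = ((A u).det)⁻¹ * (A u).adjugate i j := by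
    intro u
    rw [Matrix.inv_def, Matrix.smul_apply, Ring.inverse_eq_inv', smul_eq_mul]
  simp only [h]
  exact ((differentiableAt_det hA).inv hdet).mul (differentiableAt_adjugate hA i j)

lemma hasDerivAt_entry_mul {A B : ℝ → Matrix m m ℂ} {A' B' : Matrix m m ℂ} {t : ℝ}
    (hA : ∀ i j, HasDerivAt (fun u => A u i j) (A' i j) t)
    (hB : ∀ i j, HasDerivAt (fun u => B u i j) (B' i j) t) (i j : m) :
    HasDerivAt (fun u => (A u * B u) i j) ((A' * B t + A t * B') i j) t := by
  have h : ∀ u, (A u * B u) i j = ∑ k, A u i k * B u k j := fun u => Matrix.mul_apply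
  simp only [h]
  have h2 := HasDerivAt.fun_sum (u := (Finset.univ : Finset m))
      (fun k _ => (hA i k).mul (hB k j))
  refine h2.congr_deriv ?_
  simp [Matrix.add_apply, Matrix.mul_apply, Finset.sum_add_distrib]


lemma comm_of_ode {N : ℕ} (L0 : Matrix (Fin N) (Fin N) ℂ) (g : ℝ → Matrix (Fin N) (Fin N) ℂ)
    (hg0 : g 0 = 1)
    (hgderiv : ∀ t : ℝ, ∀ i j : Fin N, HasDerivAt (fun u => g u i j) ((g t * L0) i j) t) :
    ∀ u : ℝ, g u * L0 = L0 * g u := by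
  classical
  let T : ((Fin N → Fin N → ℂ)) →ₗ[ℝ] (Fin N → Fin N → ℂ) :=
    { toFun := fun y i j => ∑ k, y i k * L0 k j
      map_add' := by
        intro y z; funext i j
        simp [add_mul, Finset.sum_add_distrib]
      map_smul' := by
        intro c y; funext i j
        simp [Finset.smul_sum, smul_mul_assoc, mul_assoc] }
  let T' : ((Fin N → Fin N → ℂ)) →L[ℝ] (Fin N → Fin N → ℂ) :=
    ⟨T, T.continuous_of_finiteDimensional⟩
  set f : ℝ → (Fin N → Fin N → ℂ) := fun u i j => (g u * L0) i j with hf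
  set h : ℝ → (Fin N → Fin N → ℂ) := fun u i j => (L0 * g u) i j with hh
  have hfd : ∀ u, HasDerivAt f (T' (f u)) u := by
    intro u
    rw [hasDerivAt_pi]; intro i
    rw [hasDerivAt_pi]; intro j
    have h1 : HasDerivAt (fun v => ∑ k, g v i k * L0 k j) (∑ k, (g u * L0) i k * L0 k j) u :=
      HasDerivAt.fun_sum fun k _ => (hgderiv u i k).mul_const (L0 k j)
    have h2 : (fun v => f v i j) = fun v => ∑ k, g v i k * L0 k j := by
      funext v; simp [hf, Matrix.mul_apply]
    have h3 : T' (f u) i j = ∑ k, (g u * L0) i k * L0 k j := rfl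
    rw [h2, h3]; exact h1
  have hhd : ∀ u, HasDerivAt h (T' (h u)) u := by
    intro u
    rw [hasDerivAt_pi]; intro i
    rw [hasDerivAt_pi]; intro j
    have h1 : HasDerivAt (fun v => ∑ k, L0 i k * g v k j) (∑ k, L0 i k * (g u * L0) k j) u :=
      HasDerivAt.fun_sum fun k _ => (hgderiv u k j).const_mul (L0 i k)
    have h2 : (fun v => h v i j) = fun v => ∑ k, L0 i k * g v k j := by
      funext v; simp [hh, Matrix.mul_apply]
    have h3 : T' (h u) i j = ∑ k, L0 i k * (g u * L0) k j := by
      show ∑ k, (L0 * g u) i k * L0 k j = _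
      rw [← Matrix.mul_apply, ← Matrix.mul_apply, Matrix.mul_assoc]
    rw [h2, h3]; exact h1
  have key : ∀ u, f u = h u := by
    intro u
    have heq0 : f 0 = h 0 := by
      funext i j; simp [hf, hh, hg0]
    have h0mem : (0:ℝ) ∈ Ioo (-(|u|+1)) (|u|+1) := by
      constructor <;> [nlinarith [abs_nonneg u]; nlinarith [abs_nonneg u]]
    have humem : u ∈ Icc (-(|u|+1)) (|u|+1) := by
      constructor <;> [nlinarith [neg_abs_le u]; nlinarith [le_abs_self u]]
    have hcontf : ContinuousOn f (Icc (-(|u|+1)) (|u|+1)) :=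
      (continuous_iff_continuousAt.2 fun v => (hfd v).continuousAt).continuousOn
    have hconth : ContinuousOn h (Icc (-(|u|+1)) (|u|+1)) :=
      (continuous_iff_continuousAt.2 fun v => (hhd v).continuousAt).continuousOn
    have hlip : ∀ _t : ℝ, LipschitzOnWith ‖T'‖₊ (fun y => T' y)
        (univ : Set (Fin N → Fin N → ℂ)) := fun _ => T'.lipschitz.lipschitzOnWith
    exact ODE_solution_unique_of_mem_Icc
      (v := fun _ y => T' y) (s := fun _ => univ)
      (fun t _ => hlip t)
      h0mem hcontf (fun v _ => hfd v) (fun _ _ => mem_univ _)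
      hconth (fun v _ => hhd v) (fun _ _ => mem_univ _) heq0 humem
  intro u
  ext i j
  exact congrFun (congrFun (key u) i) j


end SymesAux

/-- The strictly lower triangular part of a matrix. -/
def lowPart {N : ℕ} {R : Type*} [Zero R] (A : Matrix (Fin N) (Fin N) R) :
    Matrix (Fin N) (Fin N) R :=
  Matrix.of fun i j => if (j : ℕ) < i then A i j else 0

set_option maxHeartbeats 1600000 in
lemma SymesAux.a_entry_differentiableAt {N : ℕ} (L0 : Matrix (Fin N) (Fin N) ℂ)
    (g a b : ℝ → Matrix (Fin N) (Fin N) ℂ)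
    (s : Set ℝ) (hs : IsOpen s)
    (hg0 : g 0 = 1)
    (hgderiv : ∀ t : ℝ, ∀ i j : Fin N,
      HasDerivAt (fun u => g u i j) ((g t * L0) i j) t)
    (ha_low : ∀ t ∈ s, ∀ i j : Fin N, (i : ℕ) < j → a t i j = 0)
    (ha_diag : ∀ t ∈ s, ∀ i : Fin N, a t i i = 1)
    (hb_up : ∀ t ∈ s, ∀ i j : Fin N, (j : ℕ) < i → b t i j = 0)
    (hb_inv : ∀ t ∈ s, IsUnit (b t).det)
    (hfact : ∀ t ∈ s, g t = (a t)⁻¹ * b t) :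
    ∀ t' ∈ s, ∀ i j : Fin N, DifferentiableAt ℝ (fun u => a u i j) t' := by
  classical
  have hcomm : ∀ u : ℝ, g u * L0 = L0 * g u := SymesAux.comm_of_ode L0 g hg0 hgderiv
  have hgdiff : ∀ (u : ℝ) (i j : Fin N), DifferentiableAt ℝ (fun v => g v i j) u :=
    fun u i j => (hgderiv u i j).differentiableAt
  -- lower triangularity of `a`
  have haLT : ∀ u ∈ s, BlockTriangular (a u) OrderDual.toDual := by
    intro u hu i j hij
    exact ha_low u hu i j (OrderDual.toDual_lt_toDual.mp hij)
  have hadet : ∀ u ∈ s, (a u).det = 1 := by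
    intro u hu
    rw [Matrix.det_of_lowerTriangular _ (haLT u hu)]
    exact Finset.prod_eq_one fun i _ => ha_diag u hu i
  have haunit : ∀ u ∈ s, IsUnit (a u).det := fun u hu => by
    rw [hadet u hu]; exact isUnit_one
  have hb_eq : ∀ u ∈ s, b u = a u * g u := by
    intro u hu
    rw [hfact u hu, ← Matrix.mul_assoc, Matrix.mul_nonsing_inv _ (haunit u hu), Matrix.one_mul]
  have hbLT : ∀ u ∈ s, BlockTriangular (b u) id := by
    intro u hu i j hij
    exact hb_up u hu i j hij
  have hbdiag : ∀ u ∈ s, ∀ i, b u i i ≠ 0 := by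
    intro u hu i h0'
    have h1 : IsUnit ((b u).det) := hb_inv u hu
    rw [Matrix.det_of_upperTriangular (hbLT u hu)] at h1
    exact h1.ne_zero (Finset.prod_eq_zero (Finset.mem_univ i) h0')
  have hgunit : ∀ u ∈ s, IsUnit (g u).det := by
    intro u hu
    have h1 := congrArg Matrix.det (hb_eq u hu)
    rw [Matrix.det_mul, hadet u hu, one_mul] at h1
    rw [← h1]
    exact hb_inv u hu
  -- leading principal blocks
  have hblock : ∀ (i : Fin N), ∀ u ∈ s,
      ((a u).toBlock (fun m : Fin N => (m:ℕ) < (i:ℕ)) (fun m : Fin N => (m:ℕ) < (i:ℕ))) *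
      ((g u).toBlock (fun m : Fin N => (m:ℕ) < (i:ℕ)) (fun m : Fin N => (m:ℕ) < (i:ℕ))) =
      (b u).toBlock (fun m : Fin N => (m:ℕ) < (i:ℕ)) (fun m : Fin N => (m:ℕ) < (i:ℕ)) := by
    intro i u hu
    have h := Matrix.toBlock_mul_eq_add (fun m : Fin N => (m:ℕ) < (i:ℕ))
      (fun m : Fin N => (m:ℕ) < (i:ℕ)) (fun m : Fin N => (m:ℕ) < (i:ℕ)) (a u) (g u)
    have hz : (a u).toBlock (fun m : Fin N => (m:ℕ) < (i:ℕ)) (fun m : Fin N => ¬ (m:ℕ) < (i:ℕ)) = 0 := by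
      ext x y
      simp only [Matrix.toBlock_apply, Matrix.zero_apply]
      exact ha_low u hu x.1 y.1 (lt_of_lt_of_le x.2 (not_lt.mp y.2))
    rw [hb_eq u hu, h, hz, Matrix.zero_mul, add_zero]
  have hadetblock : ∀ (i : Fin N), ∀ u ∈ s,
      ((a u).toBlock (fun m : Fin N => (m:ℕ) < (i:ℕ)) (fun m : Fin N => (m:ℕ) < (i:ℕ))).det = 1 := by
    intro i u hu
    have hLT : ((a u).toBlock (fun m : Fin N => (m:ℕ) < (i:ℕ))
        (fun m : Fin N => (m:ℕ) < (i:ℕ))).BlockTriangular OrderDual.toDual := by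
      intro x y hxy
      have hxy' : (x:{m : Fin N // (m:ℕ) < (i:ℕ)}) < y := OrderDual.toDual_lt_toDual.mp hxy
      exact ha_low u hu x.1 y.1 hxy'
    rw [Matrix.det_of_lowerTriangular _ hLT]
    exact Finset.prod_eq_one fun x _ => ha_diag u hu x.1
  have hgblockdet : ∀ (i : Fin N), ∀ u ∈ s,
      ((g u).toBlock (fun m : Fin N => (m:ℕ) < (i:ℕ)) (fun m : Fin N => (m:ℕ) < (i:ℕ))).det ≠ 0 := by
    intro i u hu
    have h1 := congrArg Matrix.det (hblock i u hu)
    rw [Matrix.det_mul, hadetblock i u hu, one_mul] at h1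
    rw [h1]
    have hbLTb : ((b u).toBlock (fun m : Fin N => (m:ℕ) < (i:ℕ))
        (fun m : Fin N => (m:ℕ) < (i:ℕ))).BlockTriangular id := by
      intro x y hxy
      exact hb_up u hu x.1 y.1 hxy
    rw [Matrix.det_of_upperTriangular hbLTb]
    exact Finset.prod_ne_zero_iff.mpr fun x _ => hbdiag u hu x.1
  -- differentiability of the entries of `a`
  have hadiff : ∀ t' ∈ s, ∀ i j : Fin N, DifferentiableAt ℝ (fun u => a u i j) t' := by
    intro t' ht' i j
    have hev : ∀ᶠ u in 𝓝 t', u ∈ s := hs.mem_nhds ht'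
    rcases lt_trichotomy (j:ℕ) (i:ℕ) with hj | hj | hj
    · -- Cramer-type formula
      have hform : ∀ u ∈ s, a u i j =
          ∑ q : {m : Fin N // (m:ℕ) < (i:ℕ)}, -(g u i ↑q) *
            ((g u).toBlock (fun m : Fin N => (m:ℕ) < (i:ℕ)) (fun m : Fin N => (m:ℕ) < (i:ℕ)))⁻¹ q ⟨j, hj⟩ := by
        intro u hu
        set W := (g u).toBlock (fun m : Fin N => (m:ℕ) < (i:ℕ))
          (fun m : Fin N => (m:ℕ) < (i:ℕ)) with hW
        have hWdet : IsUnit W.det := isUnit_iff_ne_zero.mpr (hgblockdet i u hu)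
        set x : {m : Fin N // (m:ℕ) < (i:ℕ)} → ℂ := fun q => a u i ↑q with hx
        have hrow : x ᵥ* W = fun q' : {m : Fin N // (m:ℕ) < (i:ℕ)} => -(g u i ↑q') := by
          funext q'
          have hb0 : (a u * g u) i ↑q' = 0 := by
            rw [← hb_eq u hu]; exact hb_up u hu i ↑q' q'.2
          rw [Matrix.mul_apply] at hb0
          have hsplit := Fintype.sum_subtype_add_sum_subtype
            (fun m : Fin N => (m:ℕ) < (i:ℕ)) (fun m => a u i m * g u m ↑q')
          have h2 : ∑ m : {m : Fin N // ¬ (m:ℕ) < (i:ℕ)}, a u i ↑m * g u ↑m ↑q'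
              = g u i ↑q' := by
            rw [Fintype.sum_eq_single (⟨i, by simp⟩ : {m : Fin N // ¬ (m:ℕ) < (i:ℕ)})]
            · simp [ha_diag u hu i]
            · intro m hm
              have him : (i:ℕ) < ((m:Fin N):ℕ) := by
                rcases lt_or_eq_of_le (not_lt.mp m.2) with h | h
                · exact h
                · exact absurd (Subtype.ext (Fin.ext h.symm) : m = ⟨i, by simp⟩) hm
              rw [ha_low u hu i ↑m him, zero_mul]
          show ∑ m' : {m : Fin N // (m:ℕ) < (i:ℕ)}, x m' * W m' q' = -(g u i ↑q')
          have h3 : (∑ m' : {m : Fin N // (m:ℕ) < (i:ℕ)}, a u i ↑m' * g u ↑m' ↑q')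
              + g u i ↑q' = 0 := by
            rw [← h2, hsplit, hb0]
          exact eq_neg_of_add_eq_zero_left h3
        have hxw : x = (fun q' : {m : Fin N // (m:ℕ) < (i:ℕ)} => -(g u i ↑q')) ᵥ* W⁻¹ := by
          rw [← hrow, Matrix.vecMul_vecMul, Matrix.mul_nonsing_inv _ hWdet, Matrix.vecMul_one]
        have h4 := congrFun hxw ⟨j, hj⟩
        simpa [Matrix.vecMul, dotProduct] using h4
      have hdiff2 : DifferentiableAt ℝ (fun u =>
          ∑ q : {m : Fin N // (m:ℕ) < (i:ℕ)}, -(g u i ↑q) *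
            ((g u).toBlock (fun m : Fin N => (m:ℕ) < (i:ℕ)) (fun m : Fin N => (m:ℕ) < (i:ℕ)))⁻¹ q ⟨j, hj⟩) t' := by
        refine DifferentiableAt.fun_sum fun q _ => DifferentiableAt.mul ((hgdiff t' i ↑q).neg) ?_
        exact SymesAux.differentiableAt_inv_entry
          (A := fun u => (g u).toBlock (fun m : Fin N => (m:ℕ) < (i:ℕ))
            (fun m : Fin N => (m:ℕ) < (i:ℕ)))
          (fun p' q' => hgdiff t' p'.1 q'.1) (hgblockdet i t' ht') q ⟨j, hj⟩
      exact hdiff2.congr_of_eventuallyEq (hev.mono fun u hu => hform u hu)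
    · -- diagonal
      refine (differentiableAt_const (1:ℂ)).congr_of_eventuallyEq (hev.mono fun u hu => ?_)
      have hij' : i = j := Fin.ext hj.symm
      show a u i j = 1
      rw [← hij']
      exact ha_diag u hu i
    · -- above diagonal
      refine (differentiableAt_const (0:ℂ)).congr_of_eventuallyEq (hev.mono fun u hu => ?_)
      show a u i j = 0
      exact ha_low u hu i j hj
  exact hadiff

/-- Symes's theorem: if `g t = exp (t L₀)` (characterized by its ODE) admits a
factorization `g t = (a t)⁻¹ * b t` with `a t` lower unipotent and `b t` upper
triangular invertible on an open set containing 0, then `L t = a t * L₀ * (a t)⁻¹`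
solves the Toda Lax equation `dL/dt = [L, L₋]`. -/
theorem stmt18 {N : ℕ} (L0 : Matrix (Fin N) (Fin N) ℂ)
    (g a b : ℝ → Matrix (Fin N) (Fin N) ℂ)
    (s : Set ℝ) (hs : IsOpen s) (h0 : (0 : ℝ) ∈ s)
    (hg0 : g 0 = 1)
    (hgderiv : ∀ t : ℝ, ∀ i j : Fin N,
      HasDerivAt (fun u => g u i j) ((g t * L0) i j) t)
    (ha_low : ∀ t ∈ s, ∀ i j : Fin N, (i : ℕ) < j → a t i j = 0)
    (ha_diag : ∀ t ∈ s, ∀ i : Fin N, a t i i = 1)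
    (hb_up : ∀ t ∈ s, ∀ i j : Fin N, (j : ℕ) < i → b t i j = 0)
    (hb_inv : ∀ t ∈ s, IsUnit (b t).det)
    (hfact : ∀ t ∈ s, g t = (a t)⁻¹ * b t) :
    ∀ t ∈ s, ∀ i j : Fin N,
      HasDerivAt (fun u => (a u * L0 * (a u)⁻¹) i j)
        (((a t * L0 * (a t)⁻¹) * lowPart (a t * L0 * (a t)⁻¹) -
          lowPart (a t * L0 * (a t)⁻¹) * (a t * L0 * (a t)⁻¹)) i j) t := by
  classical
  have hcomm : ∀ u : ℝ, g u * L0 = L0 * g u := SymesAux.comm_of_ode L0 g hg0 hgderiv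
  have hgdiff : ∀ (u : ℝ) (i j : Fin N), DifferentiableAt ℝ (fun v => g v i j) u :=
    fun u i j => (hgderiv u i j).differentiableAt
  -- lower triangularity of `a`
  have haLT : ∀ u ∈ s, BlockTriangular (a u) OrderDual.toDual := by
    intro u hu i j hij
    exact ha_low u hu i j (OrderDual.toDual_lt_toDual.mp hij)
  have hadet : ∀ u ∈ s, (a u).det = 1 := by
    intro u hu
    rw [Matrix.det_of_lowerTriangular _ (haLT u hu)]
    exact Finset.prod_eq_one fun i _ => ha_diag u hu i
  have haunit : ∀ u ∈ s, IsUnit (a u).det := fun u hu => by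
    rw [hadet u hu]; exact isUnit_one
  have hb_eq : ∀ u ∈ s, b u = a u * g u := by
    intro u hu
    rw [hfact u hu, ← Matrix.mul_assoc, Matrix.mul_nonsing_inv _ (haunit u hu), Matrix.one_mul]
  have hbLT : ∀ u ∈ s, BlockTriangular (b u) id := by
    intro u hu i j hij
    exact hb_up u hu i j hij
  have hbdiag : ∀ u ∈ s, ∀ i, b u i i ≠ 0 := by
    intro u hu i h0'
    have h1 : IsUnit ((b u).det) := hb_inv u hu
    rw [Matrix.det_of_upperTriangular (hbLT u hu)] at h1
    exact h1.ne_zero (Finset.prod_eq_zero (Finset.mem_univ i) h0')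
  have hgunit : ∀ u ∈ s, IsUnit (g u).det := by
    intro u hu
    have h1 := congrArg Matrix.det (hb_eq u hu)
    rw [Matrix.det_mul, hadet u hu, one_mul] at h1
    rw [← h1]
    exact hb_inv u hu
  -- leading principal blocks
  have hblock : ∀ (i : Fin N), ∀ u ∈ s,
      ((a u).toBlock (fun m : Fin N => (m:ℕ) < (i:ℕ)) (fun m : Fin N => (m:ℕ) < (i:ℕ))) *
      ((g u).toBlock (fun m : Fin N => (m:ℕ) < (i:ℕ)) (fun m : Fin N => (m:ℕ) < (i:ℕ))) =
      (b u).toBlock (fun m : Fin N => (m:ℕ) < (i:ℕ)) (fun m : Fin N => (m:ℕ) < (i:ℕ)) := by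
    intro i u hu
    have h := Matrix.toBlock_mul_eq_add (fun m : Fin N => (m:ℕ) < (i:ℕ))
      (fun m : Fin N => (m:ℕ) < (i:ℕ)) (fun m : Fin N => (m:ℕ) < (i:ℕ)) (a u) (g u)
    have hz : (a u).toBlock (fun m : Fin N => (m:ℕ) < (i:ℕ)) (fun m : Fin N => ¬ (m:ℕ) < (i:ℕ)) = 0 := by
      ext x y
      simp only [Matrix.toBlock_apply, Matrix.zero_apply]
      exact ha_low u hu x.1 y.1 (lt_of_lt_of_le x.2 (not_lt.mp y.2))
    rw [hb_eq u hu, h, hz, Matrix.zero_mul, add_zero]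
  have hadetblock : ∀ (i : Fin N), ∀ u ∈ s,
      ((a u).toBlock (fun m : Fin N => (m:ℕ) < (i:ℕ)) (fun m : Fin N => (m:ℕ) < (i:ℕ))).det = 1 := by
    intro i u hu
    have hLT : ((a u).toBlock (fun m : Fin N => (m:ℕ) < (i:ℕ))
        (fun m : Fin N => (m:ℕ) < (i:ℕ))).BlockTriangular OrderDual.toDual := by
      intro x y hxy
      have hxy' : (x:{m : Fin N // (m:ℕ) < (i:ℕ)}) < y := OrderDual.toDual_lt_toDual.mp hxy
      exact ha_low u hu x.1 y.1 hxy'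
    rw [Matrix.det_of_lowerTriangular _ hLT]
    exact Finset.prod_eq_one fun x _ => ha_diag u hu x.1
  have hgblockdet : ∀ (i : Fin N), ∀ u ∈ s,
      ((g u).toBlock (fun m : Fin N => (m:ℕ) < (i:ℕ)) (fun m : Fin N => (m:ℕ) < (i:ℕ))).det ≠ 0 := by
    intro i u hu
    have h1 := congrArg Matrix.det (hblock i u hu)
    rw [Matrix.det_mul, hadetblock i u hu, one_mul] at h1
    rw [h1]
    have hbLTb : ((b u).toBlock (fun m : Fin N => (m:ℕ) < (i:ℕ))
        (fun m : Fin N => (m:ℕ) < (i:ℕ))).BlockTriangular id := by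
      intro x y hxy
      exact hb_up u hu x.1 y.1 hxy
    rw [Matrix.det_of_upperTriangular hbLTb]
    exact Finset.prod_ne_zero_iff.mpr fun x _ => hbdiag u hu x.1
  have hadiff : ∀ t' ∈ s, ∀ i j : Fin N, DifferentiableAt ℝ (fun u => a u i j) t' :=
    SymesAux.a_entry_differentiableAt L0 g a b s hs hg0 hgderiv ha_low ha_diag hb_up hb_inv hfact
  -- main computation
  intro t ht i j
  have hev : ∀ᶠ u in 𝓝 t, u ∈ s := hs.mem_nhds ht
  set A' : Matrix (Fin N) (Fin N) ℂ := fun i j => deriv (fun u => a u i j) t with hA'def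
  have hA' : ∀ i j, HasDerivAt (fun u => a u i j) (A' i j) t :=
    fun i j => (hadiff t ht i j).hasDerivAt
  have hA'up : ∀ i j : Fin N, (i:ℕ) ≤ (j:ℕ) → A' i j = 0 := by
    intro i j hij
    have hconst : (fun u => a u i j) =ᶠ[𝓝 t] fun _ => a t i j := by
      refine hev.mono fun u hu => ?_
      show a u i j = a t i j
      rcases lt_or_eq_of_le hij with h | h
      · rw [ha_low u hu i j h, ha_low t ht i j h]
      · have hij' : i = j := Fin.ext h
        rw [← hij', ha_diag u hu i, ha_diag t ht i]
    have := hconst.deriv_eq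
    simp only [deriv_const] at this
    simpa [hA'def] using this
  -- inverse entries differentiable
  have hCdiff : ∀ i j : Fin N, DifferentiableAt ℝ (fun u => (a u)⁻¹ i j) t := by
    intro i j
    have hadj : ∀ u ∈ s, (a u)⁻¹ i j = (a u).adjugate i j := by
      intro u hu
      rw [Matrix.inv_def, hadet u hu, Ring.inverse_one, one_smul]
    exact (SymesAux.differentiableAt_adjugate (hadiff t ht) i j).congr_of_eventuallyEq
      (hev.mono fun u hu => hadj u hu)
  set C' : Matrix (Fin N) (Fin N) ℂ := fun i j => deriv (fun u => (a u)⁻¹ i j) t with hC'def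
  have hC' : ∀ i j, HasDerivAt (fun u => (a u)⁻¹ i j) (C' i j) t :=
    fun i j => (hCdiff i j).hasDerivAt
  -- relation A' * Ct + A * C' = 0
  have hrel : A' * (a t)⁻¹ + a t * C' = 0 := by
    ext i j
    have h1 := SymesAux.hasDerivAt_entry_mul hA' hC' i j
    have hone : (fun u => (a u * (a u)⁻¹) i j) =ᶠ[𝓝 t] fun _ => (1 : Matrix (Fin N) (Fin N) ℂ) i j := by
      refine hev.mono fun u hu => ?_
      show (a u * (a u)⁻¹) i j = (1 : Matrix (Fin N) (Fin N) ℂ) i j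
      rw [Matrix.mul_nonsing_inv _ (haunit u hu)]
    have h2 : HasDerivAt (fun _ : ℝ => (1 : Matrix (Fin N) (Fin N) ℂ) i j)
        ((A' * (a t)⁻¹ + a t * C') i j) t := h1.congr_of_eventuallyEq hone.symm
    have h3 := h2.unique (hasDerivAt_const t _)
    simpa using h3
  -- derivative of b-factor
  set B' : Matrix (Fin N) (Fin N) ℂ := A' * g t + a t * (g t * L0) with hB'def
  have hB' : ∀ i j, HasDerivAt (fun u => (a u * g u) i j) (B' i j) t :=
    SymesAux.hasDerivAt_entry_mul hA' (hgderiv t)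
  have hB'low : ∀ i j : Fin N, (j:ℕ) < (i:ℕ) → B' i j = 0 := by
    intro i j hij
    have hzero : (fun u => (a u * g u) i j) =ᶠ[𝓝 t] fun _ => (0:ℂ) := by
      refine hev.mono fun u hu => ?_
      show (a u * g u) i j = 0
      rw [← hb_eq u hu]
      exact hb_up u hu i j hij
    have h1 : HasDerivAt (fun _ : ℝ => (0:ℂ)) (B' i j) t :=
      (hB' i j).congr_of_eventuallyEq hzero.symm
    exact h1.unique (hasDerivAt_const t 0)
  -- triangularity of the inverses
  have hCtlow : BlockTriangular (a t)⁻¹ OrderDual.toDual := by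
    haveI := (a t).invertibleOfIsUnitDet (haunit t ht)
    exact Matrix.blockTriangular_inv_of_blockTriangular (haLT t ht)
  have hbinvup : BlockTriangular (b t)⁻¹ id := by
    haveI := (b t).invertibleOfIsUnitDet (hb_inv t ht)
    exact Matrix.blockTriangular_inv_of_blockTriangular (hbLT t ht)
  -- key identity B' * (b t)⁻¹ = L + A' * Ct
  have hbtinv : (b t)⁻¹ = (g t)⁻¹ * (a t)⁻¹ := by
    rw [hb_eq t ht, Matrix.mul_inv_rev]
  have hginv : g t * (g t)⁻¹ = 1 := Matrix.mul_nonsing_inv _ (hgunit t ht)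
  have e1 : ∀ X : Matrix (Fin N) (Fin N) ℂ, g t * ((g t)⁻¹ * X) = X := by
    intro X; rw [← Matrix.mul_assoc, hginv, Matrix.one_mul]
  have hkey : B' * (b t)⁻¹ = a t * L0 * (a t)⁻¹ + A' * (a t)⁻¹ := by
    rw [hB'def, hbtinv, hcomm t]
    simp only [Matrix.add_mul, Matrix.mul_assoc, e1]
    exact add_comm _ _
  -- lowPart identification
  have hlow : lowPart (a t * L0 * (a t)⁻¹) = -(A' * (a t)⁻¹) := by
    ext i j
    by_cases hij : (j:ℕ) < (i:ℕ)
    · have h1 : (B' * (b t)⁻¹) i j = 0 := by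
        rw [Matrix.mul_apply]
        refine Finset.sum_eq_zero fun k _ => ?_
        rcases lt_or_ge (k:ℕ) (i:ℕ) with hk | hk
        · rw [hB'low i k hk, zero_mul]
        · have : (b t)⁻¹ k j = 0 := hbinvup (show (id j : Fin N) < id k from
            Fin.lt_def.mpr (lt_of_lt_of_le hij hk))
          rw [this, mul_zero]
      have h3 : (a t * L0 * (a t)⁻¹) i j + (A' * (a t)⁻¹) i j = 0 := by
        rw [← Matrix.add_apply, ← hkey]
        exact h1
      simp only [lowPart, Matrix.of_apply, hij, if_true, Matrix.neg_apply]
      exact eq_neg_of_add_eq_zero_left h3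
    · have h1 : (A' * (a t)⁻¹) i j = 0 := by
        rw [Matrix.mul_apply]
        refine Finset.sum_eq_zero fun k _ => ?_
        rcases le_or_gt (i:ℕ) (k:ℕ) with hk | hk
        · rw [hA'up i k hk, zero_mul]
        · have : (a t)⁻¹ k j = 0 := hCtlow (OrderDual.toDual_lt_toDual.mpr
            (Fin.lt_def.mpr (lt_of_lt_of_le hk (not_lt.mp hij))))
          rw [this, mul_zero]
      simp only [lowPart, Matrix.of_apply, hij, if_false, Matrix.neg_apply, h1, neg_zero]
  -- derivative of L
  have hL0const : ∀ (i j : Fin N), HasDerivAt (fun _ : ℝ => L0 i j)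
      ((0 : Matrix (Fin N) (Fin N) ℂ) i j) t := by
    intro i j
    simpa using hasDerivAt_const t (L0 i j)
  have h1 : ∀ i j, HasDerivAt (fun u => (a u * L0) i j) ((A' * L0) i j) t := by
    intro i j
    have := SymesAux.hasDerivAt_entry_mul hA' hL0const i j
    simpa using this
  have hderiv : HasDerivAt (fun u => (a u * L0 * (a u)⁻¹) i j)
      ((A' * L0 * (a t)⁻¹ + (a t * L0) * C') i j) t := by
    have := SymesAux.hasDerivAt_entry_mul h1 hC' i j
    exact this
  -- final algebra
  have hCA : (a t)⁻¹ * a t = 1 := Matrix.nonsing_inv_mul _ (haunit t ht)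
  have e0 : ∀ X : Matrix (Fin N) (Fin N) ℂ, (a t)⁻¹ * (a t * X) = X := by
    intro X; rw [← Matrix.mul_assoc, hCA, Matrix.one_mul]
  have hC'eq : C' = -((a t)⁻¹ * A' * (a t)⁻¹) := by
    have h4 : (a t)⁻¹ * (A' * (a t)⁻¹) + (a t)⁻¹ * (a t * C') = 0 := by
      rw [← Matrix.mul_add, hrel, Matrix.mul_zero]
    rw [e0] at h4
    rw [Matrix.mul_assoc]
    exact eq_neg_of_add_eq_zero_right h4
  have hfinal : A' * L0 * (a t)⁻¹ + (a t * L0) * C' =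
      (a t * L0 * (a t)⁻¹) * lowPart (a t * L0 * (a t)⁻¹) -
        lowPart (a t * L0 * (a t)⁻¹) * (a t * L0 * (a t)⁻¹) := by
    rw [hlow, hC'eq]
    have eL : A' * L0 * (a t)⁻¹ = A' * (a t)⁻¹ * (a t * L0 * (a t)⁻¹) := by
      simp only [Matrix.mul_assoc, e0]
    rw [eL]
    simp only [Matrix.mul_neg, Matrix.neg_mul, sub_neg_eq_add, Matrix.mul_assoc]
    abel
  rw [← hfinal]
  exact hderiv
end
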